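/- arXiv:1806.04046 — 4 statements merged into one kernel-verified Lean document; each statement's English description precedes it below -/
import Mathlib

section
/- For each integer k ≥ 1 define w_k : (0,∞) → ℝ by w_k(r) = k^{1/2}/√(4π) for 0 < r ≤ e^{−k/2}, w_k(r) = (−2 ln r)/(√(4π) · √k) for e^{−k/2} < r ≤ 1, and w_k(r) = 0 for r > 1. Then: (i) 2π ∫₀^∞ w_k′(r)² r dr = 1, where w_k′ denotes the derivative of w_k, which exists except at the two points r = e^{−k/2} and r = 1; (ii) 2π ∫₀^∞ w_k(r)² r dr → 0 as k → ∞; and (iii) 2π ∫₀^1 e^{4π w_k(r)²} r dr ≥ 1/2. -/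
open MeasureTheory Real Set Filter

/-- The Moser sequence of truncated logarithms, in the radial variable `r = |x|`. -/
noncomputable def moserW (k : ℕ) (r : ℝ) : ℝ :=
  if r ≤ Real.exp (-(k : ℝ) / 2) then Real.sqrt k / Real.sqrt (4 * π)
  else if r ≤ 1 then -2 * Real.log r / (Real.sqrt (4 * π) * Real.sqrt k)
  else 0

private lemma moser_a_pos (k : ℕ) : 0 < Real.exp (-(k : ℝ) / 2) := Real.exp_pos _

private lemma moser_a_lt_one {k : ℕ} (hk : 1 ≤ k) : Real.exp (-(k : ℝ) / 2) < 1 := by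
  rw [show (1:ℝ) = Real.exp 0 from (Real.exp_zero).symm]
  apply Real.exp_lt_exp.mpr
  have : (1:ℝ) ≤ (k:ℝ) := by exact_mod_cast hk
  linarith

private lemma moser_measurable (k : ℕ) : Measurable (moserW k) := by
  unfold moserW
  refine Measurable.ite (measurableSet_le measurable_id measurable_const) measurable_const
    (Measurable.ite (measurableSet_le measurable_id measurable_const) ?_ measurable_const)
  exact ((Real.measurable_log.const_mul (-2)).div_const _)

/-- Part (i): unit cone-gradient norm. -/
private lemma moser_i (k : ℕ) (hk : 1 ≤ k) :
    2 * π * ∫ r in Set.Ioi (0:ℝ), deriv (moserW k) r ^ 2 * r = 1 := by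
  set a : ℝ := Real.exp (-(k : ℝ) / 2) with ha_def
  have ha0 : 0 < a := moser_a_pos k
  have ha1 : a < 1 := moser_a_lt_one hk
  have hkpos : (0:ℝ) < (k:ℝ) := by exact_mod_cast hk
  have hπ : (0:ℝ) < π := Real.pi_pos
  set h : ℝ → ℝ := (Set.Ioo a 1).indicator (fun r => (π * k * r)⁻¹) with hh_def
  have hcongr : (fun r => deriv (moserW k) r ^ 2 * r)
      =ᵐ[volume.restrict (Set.Ioi (0:ℝ))] h := by
    have hnull : (volume : Measure ℝ) ({a, 1} : Set ℝ) = 0 :=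
      (Set.to_countable _).measure_zero _
    have h0 : ∀ᵐ r : ℝ, r ∉ ({a, 1} : Set ℝ) := measure_eq_zero_iff_ae_notMem.mp hnull
    filter_upwards [ae_restrict_of_ae h0, ae_restrict_mem measurableSet_Ioi] with r hr hrpos
    simp only [Set.mem_insert_iff, Set.mem_singleton_iff, not_or] at hr
    obtain ⟨hra, hr1⟩ := hr
    have hrpos' : (0:ℝ) < r := hrpos
    rcases lt_or_gt_of_ne hra with hlt | hgt
    · -- r < a : locally constant
      have hev : moserW k =ᶠ[nhds r] fun _ => Real.sqrt k / Real.sqrt (4 * π) := by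
        filter_upwards [Iio_mem_nhds hlt] with x hx
        simp [moserW, le_of_lt (Set.mem_Iio.mp hx), ← ha_def]
      rw [hev.deriv_eq, deriv_const]
      have : r ∉ Set.Ioo a 1 := fun hmem => absurd hmem.1 (not_lt.mpr hlt.le)
      simp [hh_def, Set.indicator_of_notMem this]
    · rcases lt_or_gt_of_ne hr1 with hlt1 | hgt1
      · -- a < r < 1 : logarithmic branch
        have hev : moserW k =ᶠ[nhds r]
            fun x => -2 * Real.log x / (Real.sqrt (4 * π) * Real.sqrt k) := by
          filter_upwards [Ioo_mem_nhds hgt hlt1] with x hx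
          simp [moserW, not_le.mpr hx.1, le_of_lt hx.2, ← ha_def]
        rw [hev.deriv_eq]
        have hd : HasDerivAt
            (fun x => -2 * Real.log x / (Real.sqrt (4 * π) * Real.sqrt k))
            (-2 * r⁻¹ / (Real.sqrt (4 * π) * Real.sqrt k)) r :=
          ((Real.hasDerivAt_log hrpos'.ne').const_mul (-2)).div_const _
        rw [hd.deriv]
        have hmem : r ∈ Set.Ioo a 1 := ⟨hgt, hlt1⟩
        rw [hh_def, Set.indicator_of_mem hmem]
        have hC2 : (Real.sqrt (4 * π) * Real.sqrt k) ^ 2 = 4 * π * k := by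
          rw [mul_pow, Real.sq_sqrt (by positivity), Real.sq_sqrt (by positivity)]
        have hCne : Real.sqrt (4 * π) * Real.sqrt k ≠ 0 := by positivity
        rw [div_pow, hC2]
        field_simp
        ring
      · -- 1 < r : locally zero
        have hev : moserW k =ᶠ[nhds r] fun _ => (0:ℝ) := by
          filter_upwards [Ioi_mem_nhds hgt1] with x hx
          have hx' : (1:ℝ) < x := Set.mem_Ioi.mp hx
          have hxa : ¬ x ≤ a := by push_neg; linarith
          have hx1 : ¬ x ≤ 1 := not_le.mpr hx'
          simp [moserW, hxa, hx1, ← ha_def]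
        rw [hev.deriv_eq, deriv_const]
        have : r ∉ Set.Ioo a 1 := fun hmem => absurd hmem.2 (not_lt.mpr hgt1.le)
        simp [hh_def, Set.indicator_of_notMem this]
  rw [integral_congr_ae hcongr]
  rw [hh_def, setIntegral_indicator measurableSet_Ioo]
  have hinter : Set.Ioi (0:ℝ) ∩ Set.Ioo a 1 = Set.Ioo a 1 := by
    apply Set.inter_eq_self_of_subset_right
    intro x hx; exact lt_trans ha0 hx.1
  rw [hinter]
  have hpt : ∀ r ∈ Set.Ioo a 1, (π * ↑k * r)⁻¹ = (π * k)⁻¹ * r⁻¹ := by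
    intro r _; rw [mul_inv]
  rw [setIntegral_congr_fun measurableSet_Ioo hpt, integral_const_mul _ _]
  rw [← integral_Ioc_eq_integral_Ioo, ← intervalIntegral.integral_of_le ha1.le]
  rw [integral_inv (by
    rw [Set.uIcc_of_le ha1.le]
    intro hmem
    exact absurd hmem.1 (not_le.mpr ha0))]
  rw [one_div, Real.log_inv, Real.log_exp]
  field_simp

/-- The explicit value of the `L²` norm. -/
private lemma moser_ii_val (k : ℕ) (hk : 1 ≤ k) :
    2 * π * ∫ r in Set.Ioi (0:ℝ), moserW k r ^ 2 * r
      = 1 / (2 * k) - Real.exp (-(k:ℝ)) * (1 / 2 + 1 / (2 * k)) := by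
  set a : ℝ := Real.exp (-(k : ℝ) / 2) with ha_def
  have ha0 : 0 < a := moser_a_pos k
  have ha1 : a < 1 := moser_a_lt_one hk
  have hkpos : (0:ℝ) < (k:ℝ) := by exact_mod_cast hk
  have hπ : (0:ℝ) < π := Real.pi_pos
  set g : ℝ → ℝ := fun r => moserW k r ^ 2 * r with hg_def
  -- the three pieces
  have heq1 : Set.EqOn (fun r => (k / (4 * π)) * r) g (Set.Ioc 0 a) := by
    intro r hr
    have : moserW k r = Real.sqrt k / Real.sqrt (4 * π) := by
      simp [moserW, hr.2, ← ha_def]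
    simp only [hg_def, this]
    rw [div_pow, Real.sq_sqrt (by positivity : (0:ℝ) ≤ (k:ℝ)),
      Real.sq_sqrt (by positivity : (0:ℝ) ≤ 4 * π)]
  have heq2 : Set.EqOn (fun r => (π * k)⁻¹ * (Real.log r ^ 2 * r)) g (Set.Ioc a 1) := by
    intro r hr
    have h1 : ¬ r ≤ a := not_le.mpr hr.1
    have : moserW k r = -2 * Real.log r / (Real.sqrt (4 * π) * Real.sqrt k) := by
      simp [moserW, h1, hr.2, ← ha_def]
    simp only [hg_def, this]
    have hC2 : (Real.sqrt (4 * π) * Real.sqrt k) ^ 2 = 4 * π * k := by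
      rw [mul_pow, Real.sq_sqrt (by positivity), Real.sq_sqrt (by positivity)]
    rw [div_pow, hC2]
    field_simp
    ring
  have heq3 : Set.EqOn (fun _ => (0:ℝ)) g (Set.Ioi 1) := by
    intro r hr
    have hra : ¬ r ≤ a := by push_neg; exact lt_trans ha1 hr
    have hr1 : ¬ r ≤ 1 := not_le.mpr hr
    simp [hg_def, moserW, hra, hr1, ← ha_def]
  -- integrability
  have hint1 : IntegrableOn g (Set.Ioc 0 a) := by
    exact ((continuous_const.mul continuous_id).integrableOn_Ioc).congr_fun heq1
      measurableSet_Ioc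
  have hint2 : IntegrableOn g (Set.Ioc a 1) := by
    have hc : ContinuousOn (fun r => (π * k)⁻¹ * (Real.log r ^ 2 * r)) (Set.Icc a 1) := by
      apply continuousOn_const.mul
      apply ContinuousOn.mul _ continuousOn_id
      exact (Real.continuousOn_log.mono (by
        intro x hx
        simp only [Set.mem_compl_iff, Set.mem_singleton_iff]
        exact (lt_of_lt_of_le ha0 hx.1).ne')).pow 2
    exact ((hc.integrableOn_Icc).mono_set Set.Ioc_subset_Icc_self).congr_fun heq2
      measurableSet_Ioc
  have hint3 : IntegrableOn g (Set.Ioi 1) := by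
    exact (integrableOn_zero).congr_fun heq3 measurableSet_Ioi
  -- split the integral
  have hsplit1 : Set.Ioi (0:ℝ) = Set.Ioc 0 1 ∪ Set.Ioi 1 :=
    (Set.Ioc_union_Ioi_eq_Ioi zero_le_one).symm
  have hsplit2 : Set.Ioc (0:ℝ) 1 = Set.Ioc 0 a ∪ Set.Ioc a 1 :=
    (Set.Ioc_union_Ioc_eq_Ioc ha0.le ha1.le).symm
  have hI : ∫ r in Set.Ioi (0:ℝ), g r
      = (∫ r in Set.Ioc (0:ℝ) a, g r) + (∫ r in Set.Ioc a 1, g r)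
        + ∫ r in Set.Ioi (1:ℝ), g r := by
    rw [hsplit1, setIntegral_union Set.Ioc_disjoint_Ioi_same measurableSet_Ioi
      (by rw [hsplit2]; exact hint1.union hint2) hint3, hsplit2,
      setIntegral_union (Set.Ioc_disjoint_Ioc_of_le le_rfl) measurableSet_Ioc hint1 hint2]
  -- compute each piece
  have hI1 : ∫ r in Set.Ioc (0:ℝ) a, g r = (k / (4 * π)) * (a ^ 2 / 2) := by
    rw [← setIntegral_congr_fun measurableSet_Ioc heq1, integral_const_mul _ _,
      ← intervalIntegral.integral_of_le ha0.le, integral_id]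
    norm_num
  have hI2 : ∫ r in Set.Ioc a 1, g r
      = (π * k)⁻¹ * ((1 / 4) - (a ^ 2 / 2 * ((k:ℝ) / 2) ^ 2 + a ^ 2 / 2 * ((k:ℝ) / 2)
          + a ^ 2 / 4)) := by
    rw [← setIntegral_congr_fun measurableSet_Ioc heq2, integral_const_mul _ _,
      ← intervalIntegral.integral_of_le ha1.le]
    have hF : ∀ x ∈ Set.uIcc a 1, HasDerivAt
        (fun r : ℝ => r ^ 2 / 2 * Real.log r ^ 2 - r ^ 2 / 2 * Real.log r + r ^ 2 / 4)
        (Real.log x ^ 2 * x) x := by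
      intro x hx
      rw [Set.uIcc_of_le ha1.le] at hx
      have hx0 : (0:ℝ) < x := lt_of_lt_of_le ha0 hx.1
      have hlog : HasDerivAt Real.log x⁻¹ x := Real.hasDerivAt_log hx0.ne'
      have hsq : HasDerivAt (fun r : ℝ => r ^ 2) (2 * x) x := by
        simpa using hasDerivAt_pow 2 x
      have h1 : HasDerivAt (fun r : ℝ => r ^ 2 / 2 * Real.log r ^ 2)
          ((2 * x) / 2 * Real.log x ^ 2 + x ^ 2 / 2 * ((2:ℕ) * Real.log x ^ 1 * x⁻¹)) x :=
        (hsq.div_const 2).mul (hlog.pow 2)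
      have h2 : HasDerivAt (fun r : ℝ => r ^ 2 / 2 * Real.log r)
          ((2 * x) / 2 * Real.log x + x ^ 2 / 2 * x⁻¹) x :=
        (hsq.div_const 2).mul hlog
      have h3 : HasDerivAt (fun r : ℝ => r ^ 2 / 4) ((2 * x) / 4) x := hsq.div_const 4
      have := (h1.sub h2).add h3
      refine this.congr_deriv ?_
      push_cast
      field_simp
      ring
    have hInt : IntervalIntegrable (fun r => Real.log r ^ 2 * r) volume a 1 := by
      apply ContinuousOn.intervalIntegrable
      rw [Set.uIcc_of_le ha1.le]
      apply ContinuousOn.mul _ continuousOn_id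
      exact (Real.continuousOn_log.mono (by
        intro x hx
        simp only [Set.mem_compl_iff, Set.mem_singleton_iff]
        exact (lt_of_lt_of_le ha0 hx.1).ne')).pow 2
    rw [intervalIntegral.integral_eq_sub_of_hasDerivAt hF hInt]
    have hloga : Real.log a = -(k:ℝ) / 2 := by rw [ha_def, Real.log_exp]
    rw [hloga, Real.log_one]
    ring
  have hI3 : ∫ r in Set.Ioi (1:ℝ), g r = 0 := by
    rw [← setIntegral_congr_fun measurableSet_Ioi heq3, integral_zero]
  rw [show (∫ r in Set.Ioi (0:ℝ), moserW k r ^ 2 * r) = ∫ r in Set.Ioi (0:ℝ), g r from rfl,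
    hI, hI1, hI2, hI3]
  have ha2 : a ^ 2 = Real.exp (-(k:ℝ)) := by
    rw [sq, ha_def, ← Real.exp_add]
    norm_num
  rw [ha2]
  field_simp
  ring

/-- Part (ii): the `L²` norms tend to zero. -/
private lemma moser_ii :
    Filter.Tendsto (fun k : ℕ => 2 * π * ∫ r in Set.Ioi (0:ℝ), moserW k r ^ 2 * r)
      Filter.atTop (nhds 0) := by
  have hcongr : (fun k : ℕ => 1 / (2 * (k:ℝ)) - Real.exp (-(k:ℝ)) * (1 / 2 + 1 / (2 * (k:ℝ))))
      =ᶠ[Filter.atTop] (fun k : ℕ => 2 * π * ∫ r in Set.Ioi (0:ℝ), moserW k r ^ 2 * r) := by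
    filter_upwards [Filter.eventually_ge_atTop 1] with k hk
    exact (moser_ii_val k hk).symm
  apply Filter.Tendsto.congr' hcongr
  have h1 : Filter.Tendsto (fun k : ℕ => 1 / (2 * (k:ℝ))) Filter.atTop (nhds 0) := by
    have := tendsto_one_div_atTop_nhds_zero_nat.const_mul (1/2 : ℝ)
    rw [mul_zero] at this
    apply this.congr
    intro k
    simp [one_div, mul_inv, mul_comm]
  have h2 : Filter.Tendsto (fun k : ℕ => Real.exp (-(k:ℝ))) Filter.atTop (nhds 0) := by
    apply Real.tendsto_exp_atBot.comp
    exact tendsto_neg_atBot_iff.mpr tendsto_natCast_atTop_atTop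
  have h4 : Filter.Tendsto (fun k : ℕ => (1/2 : ℝ) + 1 / (2 * (k:ℝ)))
      Filter.atTop (nhds (1/2 + 0)) := tendsto_const_nhds.add h1
  have h6 := h1.sub (h2.mul h4)
  simpa using h6

/-- A uniform bound on `moserW k ^ 2`. -/
private lemma moser_sq_le (k : ℕ) (hk : 1 ≤ k) (r : ℝ) :
    moserW k r ^ 2 ≤ (k:ℝ) / (4 * π) := by
  have hπ : (0:ℝ) < π := Real.pi_pos
  have hkpos : (0:ℝ) < (k:ℝ) := by exact_mod_cast hk
  set a : ℝ := Real.exp (-(k : ℝ) / 2) with ha_def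
  have ha0 : 0 < a := moser_a_pos k
  unfold moserW
  split_ifs with h1 h2
  · rw [div_pow, Real.sq_sqrt hkpos.le, Real.sq_sqrt (by positivity : (0:ℝ) ≤ 4 * π)]
  · have hra : a < r := not_le.mp h1
    have hlog_le : -2 * Real.log r ≤ (k:ℝ) := by
      have : Real.log a ≤ Real.log r := Real.log_le_log ha0 hra.le
      rw [ha_def, Real.log_exp] at this
      linarith
    have hlog_nonneg : 0 ≤ -2 * Real.log r := by
      have : Real.log r ≤ 0 := Real.log_nonpos (le_of_lt (lt_trans ha0 hra)) h2
      linarith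
    have hC2 : (Real.sqrt (4 * π) * Real.sqrt k) ^ 2 = 4 * π * k := by
      rw [mul_pow, Real.sq_sqrt (by positivity), Real.sq_sqrt (by positivity)]
    rw [div_pow, hC2]
    have hnum : (-2 * Real.log r) ^ 2 ≤ (k:ℝ) ^ 2 :=
      pow_le_pow_left₀ hlog_nonneg hlog_le 2
    calc (-2 * Real.log r) ^ 2 / (4 * π * k) ≤ (k:ℝ) ^ 2 / (4 * π * k) := by
          gcongr
      _ = (k:ℝ) / (4 * π) := by field_simp
  · simpa using (by positivity : (0:ℝ) ≤ (k:ℝ) / (4 * π))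

/-- Part (iii): lower bound on the exponential integral. -/
private lemma moser_iii (k : ℕ) (hk : 1 ≤ k) :
    1 / 2 ≤ 2 * π * ∫ r in Set.Ioc (0:ℝ) 1, Real.exp (4 * π * moserW k r ^ 2) * r := by
  have hπ : (0:ℝ) < π := Real.pi_pos
  have hf : IntegrableOn (fun r : ℝ => r) (Set.Ioc (0:ℝ) 1) :=
    continuous_id.integrableOn_Ioc
  have hmeas : AEStronglyMeasurable (fun r : ℝ => Real.exp (4 * π * moserW k r ^ 2) * r)
      (volume : Measure ℝ) := by
    exact ((((moser_measurable k).pow_const 2).const_mul (4*π)).exp.mul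
      measurable_id).aestronglyMeasurable
  have hg : IntegrableOn (fun r : ℝ => Real.exp (4 * π * moserW k r ^ 2) * r)
      (Set.Ioc (0:ℝ) 1) := by
    apply Measure.integrableOn_of_bounded (M := Real.exp k) measure_Ioc_lt_top.ne hmeas
    filter_upwards [ae_restrict_mem measurableSet_Ioc] with r hr
    have hb := moser_sq_le k hk r
    have harg : 4 * π * moserW k r ^ 2 ≤ (k:ℝ) := by
      have := mul_le_mul_of_nonneg_left hb (by positivity : (0:ℝ) ≤ 4 * π)
      calc 4 * π * moserW k r ^ 2 ≤ 4 * π * ((k:ℝ) / (4 * π)) := this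
        _ = (k:ℝ) := by field_simp
    rw [Real.norm_eq_abs, abs_of_nonneg (mul_nonneg (Real.exp_pos _).le hr.1.le)]
    calc Real.exp (4 * π * moserW k r ^ 2) * r ≤ Real.exp (k:ℝ) * 1 := by
          apply mul_le_mul (Real.exp_le_exp.mpr harg) hr.2 hr.1.le (Real.exp_pos _).le
      _ = Real.exp (k:ℝ) := mul_one _
  have hmono : ∀ r ∈ Set.Ioc (0:ℝ) 1, r ≤ Real.exp (4 * π * moserW k r ^ 2) * r := by
    intro r hr
    have h1 : (1:ℝ) ≤ Real.exp (4 * π * moserW k r ^ 2) :=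
      Real.one_le_exp (by positivity)
    nlinarith [hr.1.le]
  have hle := setIntegral_mono_on hf hg measurableSet_Ioc hmono
  have hval : ∫ r in Set.Ioc (0:ℝ) 1, r = 1 / 2 := by
    rw [← intervalIntegral.integral_of_le zero_le_one, integral_id]
    norm_num
  rw [hval] at hle
  have : 2 * π * (1/2) ≤ 2 * π * ∫ r in Set.Ioc (0:ℝ) 1, Real.exp (4 * π * moserW k r ^ 2) * r :=
    mul_le_mul_of_nonneg_left hle (by positivity)
  have hπ3 : (3:ℝ) < π := Real.pi_gt_three
  nlinarith

/-- Properties (3.18)–(3.20) of the Moser sequence: unit cone-gradient norm,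
vanishing `L²` norm, and exponential integral bounded below. -/
theorem moser_sequence_properties :
    (∀ k : ℕ, 1 ≤ k → 2 * π * ∫ r in Set.Ioi (0:ℝ), deriv (moserW k) r ^ 2 * r = 1) ∧
    Filter.Tendsto (fun k : ℕ => 2 * π * ∫ r in Set.Ioi (0:ℝ), moserW k r ^ 2 * r)
      Filter.atTop (nhds 0) ∧
    (∀ k : ℕ, 1 ≤ k →
      1 / 2 ≤ 2 * π * ∫ r in Set.Ioc (0:ℝ) 1, Real.exp (4 * π * moserW k r ^ 2) * r) := by
  exact ⟨moser_i, moser_ii, moser_iii⟩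
end

section
/- For every q ≥ 2 there exists a constant C₁ > 0, depending only on q, with the following property: if p satisfies 1/p + 1/q = 1, w : [0,∞) → ℝ is continuously differentiable with w(0) = 0, w′(t) ≥ 0 for all t ≥ 0, and ∫₀^∞ w′(t)^q dt ≤ 1, then for every β ≤ 1, ∫₀^∞ e^{β w(t)^p − t} dt ≤ C₁. -/
open MeasureTheory Real Set Filter

set_option maxHeartbeats 1000000

private lemma aux_bernoulli_low {u r : ℝ} (hu : 0 ≤ u) (hr0 : 0 ≤ r) (hr1 : r ≤ 1) :
    u ^ r ≤ 1 + r * (u - 1) := by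
  have h := rpow_one_add_le_one_add_mul_self (s := u - 1) (by linarith) hr0 hr1
  rw [show (1 : ℝ) + (u - 1) = u by ring] at h
  exact h

private lemma aux_concave_rpow {A B r : ℝ} (hA : 0 ≤ A) (hAB : A ≤ B) (hB : 0 < B)
    (hr0 : 0 < r) (hr1 : r ≤ 1) :
    (B - A) * (r * B ^ (r - 1)) ≤ B ^ r - A ^ r := by
  have h1 : (A / B) ^ r ≤ 1 + r * (A / B - 1) :=
    aux_bernoulli_low (div_nonneg hA hB.le) hr0.le hr1
  have h2 : (A / B) ^ r = A ^ r / B ^ r := Real.div_rpow hA hB.le r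
  have h3 : (0 : ℝ) < B ^ r := Real.rpow_pos_of_pos hB r
  have h4 : B ^ r = B * B ^ (r - 1) := by
    have h := Real.rpow_add hB 1 (r - 1)
    rw [show (1 : ℝ) + (r - 1) = r by ring, Real.rpow_one] at h
    exact h
  have h5 : A ^ r ≤ B ^ r + r * (A * B ^ (r - 1) - B * B ^ (r - 1)) := by
    have hAB' : A / B * B ^ r = A * B ^ (r - 1) := by
      rw [h4]; field_simp
    calc A ^ r = (A / B) ^ r * B ^ r := by rw [h2]; field_simp
      _ ≤ (1 + r * (A / B - 1)) * B ^ r := mul_le_mul_of_nonneg_right h1 h3.le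
      _ = B ^ r + r * (A / B * B ^ r - B ^ r) := by ring
      _ = B ^ r + r * (A * B ^ (r - 1) - B * B ^ (r - 1)) := by rw [hAB', h4]
  nlinarith [h5, h4]

/-- Moser's one-dimensional lemma (inequalities (3.12)–(3.13)): for `q ≥ 2` there is a
constant `C₁ = C₁(q)` bounding `∫₀^∞ e^{β w^p − t} dt` for all admissible `w` and `β ≤ 1`. -/
theorem moser_one_dimensional_lemma (q : ℝ) (hq : 2 ≤ q) :
    ∃ C₁ : ℝ, 0 < C₁ ∧ ∀ p : ℝ, 1 / p + 1 / q = 1 →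
      ∀ w w' : ℝ → ℝ,
        (∀ t ∈ Set.Ici (0:ℝ), HasDerivWithinAt w (w' t) (Set.Ici 0) t) →
        ContinuousOn w' (Set.Ici 0) →
        w 0 = 0 → (∀ t, 0 ≤ t → 0 ≤ w' t) →
        (∫⁻ t in Set.Ioi (0:ℝ), ENNReal.ofReal (w' t ^ q)) ≤ 1 →
        ∀ β : ℝ, β ≤ 1 →
          ∫⁻ t in Set.Ioi (0:ℝ), ENNReal.ofReal (Real.exp (β * w t ^ p - t)) ≤
            ENNReal.ofReal C₁ := by
  have hq0 : (0:ℝ) < q := by linarith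
  have hq1 : (1:ℝ) < q := by linarith
  obtain ⟨p₀, hp₀def⟩ : ∃ p₀ : ℝ, p₀ = (1 - 1/q)⁻¹ := ⟨_, rfl⟩
  have hqinv : (0:ℝ) < 1/q := by positivity
  have hqinv2 : 1/q ≤ 1/2 := by
    rw [div_le_div_iff₀ hq0 (by norm_num)]; linarith
  have hip : (0:ℝ) < 1 - 1/q := by linarith
  have hp₀pos : 0 < p₀ := by rw [hp₀def]; positivity
  have hmul : (1 - 1/q) * p₀ = 1 := by rw [hp₀def]; exact mul_inv_cancel₀ hip.ne'
  have h1p₀ : 1 < p₀ := by nlinarith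
  have hp₀2 : p₀ ≤ 2 := by nlinarith
  have h1p₀inv : 1/p₀ = 1 - 1/q := by
    rw [hp₀def, one_div, inv_inv]
  have hp1q : 1/p₀ + 1/q = 1 := by rw [h1p₀inv]; ring
  have hrlt1 : 1/p₀ < 1 := by rw [h1p₀inv]; linarith
  have hrpos : 0 < 1/p₀ := by positivity
  have hqp : q / p₀ = q - 1 := by
    have : q / p₀ = q * (1/p₀) := by ring
    rw [this, h1p₀inv]; field_simp
  have conj : Real.HolderConjugate p₀ q := by
    rw [Real.holderConjugate_iff]; constructor
    · exact h1p₀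
    · rw [← one_div, ← one_div]; exact hp1q
  -- constants
  obtain ⟨c, hcdef⟩ : ∃ c : ℝ, c = (1/2:ℝ) ^ (1/p₀) - 1/2 := ⟨_, rfl⟩
  have hc : 0 < c := by
    have h := Real.rpow_lt_rpow_of_exponent_gt (x := (1/2:ℝ)) (by norm_num) (by norm_num) hrlt1
    rw [Real.rpow_one] at h
    rw [hcdef]; linarith
  have hchalf : c ≤ 1/2 := by
    have h : ((1:ℝ)/2) ^ (1/p₀) ≤ 1 :=
      Real.rpow_le_one (by norm_num) (by norm_num) hrpos.le
    rw [hcdef]; linarith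
  obtain ⟨K, hKdef⟩ : ∃ K : ℝ, K = (c⁻¹) ^ p₀ := ⟨_, rfl⟩
  have hcinv : 1 ≤ c⁻¹ := by
    rw [le_inv_comm₀ one_pos hc]; linarith
  have hK1 : 1 ≤ K := by
    have h := Real.rpow_le_rpow (by norm_num : (0:ℝ) ≤ 1) hcinv hp₀pos.le
    rw [Real.one_rpow] at h
    rw [hKdef]; exact h
  obtain ⟨L, hLdef⟩ : ∃ L : ℝ, L = (2:ℝ) ^ q * (q - 1) := ⟨_, rfl⟩
  have h2q4 : (4:ℝ) ≤ (2:ℝ) ^ q := by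
    have h := Real.rpow_le_rpow_of_exponent_le (by norm_num : (1:ℝ) ≤ 2) hq
    have e : (2:ℝ) ^ (2:ℝ) = 4 := by
      rw [show (2:ℝ) = ((2:ℕ):ℝ) from by norm_num, Real.rpow_natCast]
      norm_num
    rw [e] at h; exact h
  have hL4 : 4 ≤ L := by
    rw [hLdef]; nlinarith
  obtain ⟨M, hMdef⟩ : ∃ M : ℝ, M = (2*p₀) ^ q * ((q - 1) * K) + 2 := ⟨_, rfl⟩
  have h2p₀q : (0:ℝ) ≤ (2*p₀) ^ q := Real.rpow_nonneg (by positivity) q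
  have hM2 : 2 ≤ M := by
    rw [hMdef]
    linarith [mul_nonneg h2p₀q (mul_nonneg (by linarith : (0:ℝ) ≤ q - 1) (by linarith : (0:ℝ) ≤ K))]
  obtain ⟨D, hDdef⟩ : ∃ D : ℝ, D = L + M + 1 := ⟨_, rfl⟩
  have hD : 0 < D := by rw [hDdef]; linarith
  refine ⟨D * 4, by linarith, ?_⟩
  intro p hpq w w' hderiv hw'c hw0 hw'nn hbudget β hβ
  -- identify p with p₀
  have h1p : 1/p = 1 - 1/q := by linarith
  have hppos : 0 < p := by
    have h : 0 < 1/p := by rw [h1p]; linarith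
    exact one_div_pos.mp h
  have hpp₀ : p = p₀ := by
    rw [hp₀def, ← h1p, one_div, inv_inv]
  rw [hpp₀] at hpq h1p hppos ⊢
  clear hpp₀ p
  -- basic facts about w
  have hwcont : ContinuousOn w (Ici 0) := fun t ht => (hderiv t ht).continuousWithinAt
  have hw'int : ∀ a b : ℝ, 0 ≤ a → a ≤ b → IntervalIntegrable w' volume a b := by
    intro a b ha hab
    apply ContinuousOn.intervalIntegrable
    apply hw'c.mono
    rw [uIcc_of_le hab]
    exact fun t htt => le_trans ha htt.1
  have hwq_cont : ContinuousOn (fun t => w' t ^ q) (Ici 0) :=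
    hw'c.rpow_const (fun t _ => Or.inr hq0.le)
  have hwq_int : ∀ a b : ℝ, 0 ≤ a → a ≤ b →
      IntervalIntegrable (fun t => w' t ^ q) volume a b := by
    intro a b ha hab
    apply ContinuousOn.intervalIntegrable
    apply hwq_cont.mono
    rw [uIcc_of_le hab]
    exact fun t htt => le_trans ha htt.1
  have ftc : ∀ a b : ℝ, 0 ≤ a → a ≤ b → ∫ t in a..b, w' t = w b - w a := by
    intro a b ha hab
    apply intervalIntegral.integral_eq_sub_of_hasDeriv_right_of_le hab
    · exact hwcont.mono (fun t htt => le_trans ha htt.1)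
    · intro x hx
      exact (hderiv x (le_trans ha hx.1.le)).mono
        (fun y hy => le_trans (le_trans ha hx.1.le) (le_of_lt hy))
    · exact hw'int a b ha hab
  have hwmono : ∀ a b : ℝ, 0 ≤ a → a ≤ b → w a ≤ w b := by
    intro a b ha hab
    have h := ftc a b ha hab
    have h2 : 0 ≤ ∫ t in a..b, w' t :=
      intervalIntegral.integral_nonneg hab (fun t htt => hw'nn t (le_trans ha htt.1))
    linarith
  have hwnn : ∀ t : ℝ, 0 ≤ t → 0 ≤ w t := by
    intro t ht
    have := hwmono 0 t le_rfl ht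
    rw [hw0] at this; exact this
  obtain ⟨F, hFdef⟩ : ∃ F : ℝ → ℝ, F = fun b => ∫ t in (0:ℝ)..b, w' t ^ q := ⟨_, rfl⟩
  have hFdiff : ∀ a b : ℝ, 0 ≤ a → a ≤ b → ∫ t in a..b, w' t ^ q = F b - F a := by
    intro a b ha hab
    have h := intervalIntegral.integral_add_adjacent_intervals
      (hwq_int 0 a le_rfl ha) (hwq_int a b ha hab)
    rw [hFdef]; dsimp only; linarith
  have hFnn : ∀ b : ℝ, 0 ≤ b → 0 ≤ F b := by
    intro b hb
    rw [hFdef]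
    exact intervalIntegral.integral_nonneg hb
      (fun t htt => Real.rpow_nonneg (hw'nn t htt.1) q)
  have hFmono : ∀ a b : ℝ, 0 ≤ a → a ≤ b → F a ≤ F b := by
    intro a b ha hab
    have h := hFdiff a b ha hab
    have h2 : 0 ≤ ∫ t in a..b, w' t ^ q :=
      intervalIntegral.integral_nonneg hab
        (fun t htt => Real.rpow_nonneg (hw'nn t (le_trans ha htt.1)) q)
    linarith
  have hFle1 : ∀ b : ℝ, 0 ≤ b → F b ≤ 1 := by
    intro b hb
    have hint : IntegrableOn (fun t => w' t ^ q) (Ioc 0 b) :=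
      (intervalIntegrable_iff_integrableOn_Ioc_of_le hb).1 (hwq_int 0 b le_rfl hb)
    have h1 : ENNReal.ofReal (F b) = ∫⁻ t in Ioc 0 b, ENNReal.ofReal (w' t ^ q) := by
      rw [hFdef]; dsimp only
      rw [intervalIntegral.integral_of_le hb]
      exact ofReal_integral_eq_lintegral_ofReal hint
        ((ae_restrict_iff' measurableSet_Ioc).2
          (ae_of_all _ fun t htt => Real.rpow_nonneg (hw'nn t htt.1.le) q))
    have h2 : (∫⁻ t in Ioc 0 b, ENNReal.ofReal (w' t ^ q)) ≤
        ∫⁻ t in Ioi 0, ENNReal.ofReal (w' t ^ q) :=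
      lintegral_mono_set Ioc_subset_Ioi_self
    have h3 : ENNReal.ofReal (F b) ≤ 1 := by
      rw [h1]; exact h2.trans hbudget
    exact ENNReal.ofReal_le_one.mp h3
  -- Hölder estimate
  have holder : ∀ a b : ℝ, 0 ≤ a → a ≤ b →
      w b - w a ≤ (b - a) ^ (1/p₀) * (F b - F a) ^ (1/q) := by
    intro a b ha hab
    have hIoc : Ioc a b ⊆ Ici (0:ℝ) := fun t htt => le_trans ha htt.1.le
    have hFab : 0 ≤ F b - F a := sub_nonneg.2 (hFmono a b ha hab)
    have hw'aem : AEMeasurable (fun t => ENNReal.ofReal (w' t)) (volume.restrict (Ioc a b)) :=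
      ENNReal.measurable_ofReal.comp_aemeasurable
        ((hw'c.mono hIoc).aemeasurable measurableSet_Ioc)
    have h1aem : AEMeasurable (fun _ : ℝ => (1:ENNReal)) (volume.restrict (Ioc a b)) :=
      aemeasurable_const
    have hH := ENNReal.lintegral_mul_le_Lp_mul_Lq (volume.restrict (Ioc a b)) conj h1aem hw'aem
    simp only [Pi.mul_apply, one_mul, ENNReal.one_rpow, lintegral_const,
      Measure.restrict_apply_univ] at hH
    have hIw' : IntegrableOn w' (Ioc a b) :=
      (intervalIntegrable_iff_integrableOn_Ioc_of_le hab).1 (hw'int a b ha hab)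
    have hIq : IntegrableOn (fun t => w' t ^ q) (Ioc a b) :=
      (intervalIntegrable_iff_integrableOn_Ioc_of_le hab).1 (hwq_int a b ha hab)
    have hnn : 0 ≤ᵐ[volume.restrict (Ioc a b)] w' :=
      (ae_restrict_iff' measurableSet_Ioc).2 (ae_of_all _ fun t htt => hw'nn t (hIoc htt))
    have hnnq : 0 ≤ᵐ[volume.restrict (Ioc a b)] (fun t => w' t ^ q) :=
      (ae_restrict_iff' measurableSet_Ioc).2
        (ae_of_all _ fun t htt => Real.rpow_nonneg (hw'nn t (hIoc htt)) q)
    have e1 : ENNReal.ofReal (w b - w a) = ∫⁻ t in Ioc a b, ENNReal.ofReal (w' t) := by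
      rw [← ftc a b ha hab, intervalIntegral.integral_of_le hab]
      exact ofReal_integral_eq_lintegral_ofReal hIw' hnn
    have e2 : (∫⁻ t in Ioc a b, (ENNReal.ofReal (w' t)) ^ q) = ENNReal.ofReal (F b - F a) := by
      have hcg : (∫⁻ t in Ioc a b, (ENNReal.ofReal (w' t)) ^ q)
          = ∫⁻ t in Ioc a b, ENNReal.ofReal (w' t ^ q) := by
        apply setLIntegral_congr_fun_ae measurableSet_Ioc
        exact ae_of_all _ fun t htt => ENNReal.ofReal_rpow_of_nonneg (hw'nn t (hIoc htt)) hq0.le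
      rw [hcg, ← ofReal_integral_eq_lintegral_ofReal hIq hnnq,
        ← intervalIntegral.integral_of_le hab, hFdiff a b ha hab]
    rw [← e1, e2, Real.volume_Ioc] at hH
    rw [ENNReal.ofReal_rpow_of_nonneg (by linarith : (0:ℝ) ≤ b - a) hrpos.le,
      ENNReal.ofReal_rpow_of_nonneg hFab (by positivity : (0:ℝ) ≤ 1/q),
      ← ENNReal.ofReal_mul (Real.rpow_nonneg (by linarith) _)] at hH
    exact (ENNReal.ofReal_le_ofReal_iff
      (mul_nonneg (Real.rpow_nonneg (by linarith) _) (Real.rpow_nonneg hFab _))).1 hH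
  have key1 : ∀ t : ℝ, 0 ≤ t → w t ≤ t ^ (1/p₀) * (F t) ^ (1/q) := by
    intro t ht
    have h := holder 0 t le_rfl ht
    have hF0 : F 0 = 0 := by rw [hFdef]; exact intervalIntegral.integral_same
    rw [hw0, hF0, sub_zero, sub_zero, sub_zero] at h
    exact h
  have key2 : ∀ a b : ℝ, 0 ≤ a → a ≤ b →
      w b ≤ w a + (b - a) ^ (1/p₀) * (1 - F a) ^ (1/q) := by
    intro a b ha hab
    have h := holder a b ha hab
    have h2 : (F b - F a) ^ (1/q) ≤ (1 - F a) ^ (1/q) :=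
      Real.rpow_le_rpow (sub_nonneg.2 (hFmono a b ha hab))
        (by have := hFle1 b (le_trans ha hab); linarith) (by positivity)
    have h3 : (b - a) ^ (1/p₀) * (F b - F a) ^ (1/q) ≤ (b - a) ^ (1/p₀) * (1 - F a) ^ (1/q) :=
      mul_le_mul_of_nonneg_left h2 (Real.rpow_nonneg (by linarith) _)
    linarith
  have hwle : ∀ t : ℝ, 0 ≤ t → w t ≤ t ^ (1/p₀) := by
    intro t ht
    have h := key1 t ht
    have h2 : (F t) ^ (1/q) ≤ 1 :=
      Real.rpow_le_one (hFnn t ht) (hFle1 t ht) (by positivity)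
    have h3 : t ^ (1/p₀) * (F t) ^ (1/q) ≤ t ^ (1/p₀) * 1 :=
      mul_le_mul_of_nonneg_left h2 (Real.rpow_nonneg ht _)
    rw [mul_one] at h3
    linarith
  have hΦ : ∀ t : ℝ, 0 ≤ t → w t ^ p₀ ≤ t := by
    intro t ht
    have h1 : w t ^ p₀ ≤ (t ^ (1/p₀)) ^ p₀ :=
      Real.rpow_le_rpow (hwnn t ht) (hwle t ht) hp₀pos.le
    rwa [← Real.rpow_mul ht, one_div_mul_cancel hp₀pos.ne', Real.rpow_one] at h1
  -- root extraction: for points of the bad set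
  have hroot : ∀ s t : ℝ, 0 < t - s → t - s < w t ^ p₀ → 0 ≤ t →
      (t - s) ^ (1/p₀) < w t := by
    intro s t h0 hE ht
    have h := Real.rpow_lt_rpow h0.le hE hrpos
    rwa [← Real.rpow_mul (hwnn t ht), mul_one_div_cancel hp₀pos.ne', Real.rpow_one] at h
  -- Step A : tail bound
  have tailb : ∀ s t₁ : ℝ, 1 ≤ s → L * s ≤ t₁ → t₁ - s < w t₁ ^ p₀ →
      1 - F t₁ ≤ (q - 1) * s / t₁ := by
    intro s t₁ hs hLt hE
    have hs0 : (0:ℝ) < s := by linarith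
    have ht₁4s : 4 * s ≤ t₁ := le_trans (mul_le_mul_of_nonneg_right hL4 hs0.le) hLt
    have ht₁ : (0:ℝ) < t₁ := by linarith
    have hst₁ : s / t₁ ≤ 1/4 := by
      rw [div_le_div_iff₀ ht₁ (by norm_num)]; linarith
    have hst₁0 : 0 < s / t₁ := by positivity
    have h1 : w t₁ ≤ t₁ ^ (1/p₀) * F t₁ ^ (1/q) := key1 t₁ ht₁.le
    have h2 : w t₁ ^ p₀ ≤ t₁ * F t₁ ^ (p₀/q) := by
      have h := Real.rpow_le_rpow (hwnn t₁ ht₁.le) h1 hp₀pos.le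
      rwa [Real.mul_rpow (Real.rpow_nonneg ht₁.le _) (Real.rpow_nonneg (hFnn t₁ ht₁.le) _),
        ← Real.rpow_mul ht₁.le, ← Real.rpow_mul (hFnn t₁ ht₁.le),
        one_div_mul_cancel hp₀pos.ne', Real.rpow_one,
        show 1/q * p₀ = p₀/q by ring] at h
    have h3 : 1 - s / t₁ < F t₁ ^ (p₀/q) := by
      have hlt : t₁ - s < t₁ * F t₁ ^ (p₀/q) := lt_of_lt_of_le hE h2
      have h' : (t₁ - s) / t₁ < F t₁ ^ (p₀/q) := by
        rw [div_lt_iff₀ ht₁]; linarith [hlt]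
      calc 1 - s / t₁ = (t₁ - s) / t₁ := by field_simp
        _ < _ := h'
    have h30 : (0:ℝ) ≤ 1 - s / t₁ := by linarith
    have h4 : (1 - s / t₁) ^ (q/p₀) < F t₁ := by
      have h := Real.rpow_lt_rpow h30 h3 (by positivity : (0:ℝ) < q/p₀)
      rwa [← Real.rpow_mul (hFnn t₁ ht₁.le),
        show p₀/q * (q/p₀) = 1 by field_simp, Real.rpow_one] at h
    have h5 : 1 - (q - 1) * (s / t₁) ≤ (1 - s / t₁) ^ (q/p₀) := by
      have hb := one_add_mul_self_le_rpow_one_add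
        (s := -(s / t₁)) (by linarith) (p := q/p₀) (by rw [hqp]; linarith)
      calc 1 - (q - 1) * (s / t₁) = 1 + (q/p₀) * (-(s / t₁)) := by rw [hqp]; ring
        _ ≤ (1 + -(s / t₁)) ^ (q/p₀) := hb
        _ = (1 - s / t₁) ^ (q/p₀) := by rw [sub_eq_add_neg]
    have h6 : 1 - (q - 1) * (s / t₁) < F t₁ := lt_of_le_of_lt h5 h4
    calc 1 - F t₁ ≤ (q - 1) * (s / t₁) := by linarith
      _ = (q - 1) * s / t₁ := by ring
  -- Step B : points of the bad set beyond L*s are comparable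
  have pairB : ∀ s t₁ t₂ : ℝ, 1 ≤ s → L * s ≤ t₁ → t₁ ≤ t₂ →
      t₁ - s < w t₁ ^ p₀ → t₂ - s < w t₂ ^ p₀ → t₂ ≤ K * t₁ := by
    intro s t₁ t₂ hs hLt h12 hE1 hE2
    have hs0 : (0:ℝ) < s := by linarith
    have ht₁4s : 4 * s ≤ t₁ := le_trans (mul_le_mul_of_nonneg_right hL4 hs0.le) hLt
    have ht₁ : (0:ℝ) < t₁ := by linarith
    have ht₂ : (0:ℝ) < t₂ := lt_of_lt_of_le ht₁ h12
    have htail := tailb s t₁ hs hLt hE1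
    have h0F : (0:ℝ) ≤ 1 - F t₁ := by have := hFle1 t₁ ht₁.le; linarith
    have hhalf2 : ((1:ℝ)/2) ^ q * (2:ℝ) ^ q = 1 := by
      rw [← Real.mul_rpow (by norm_num) (by norm_num)]
      norm_num
    have htau : (q - 1) * s / t₁ ≤ ((1:ℝ)/2) ^ q := by
      rw [div_le_iff₀ ht₁]
      have hh : (0:ℝ) ≤ ((1:ℝ)/2) ^ q := Real.rpow_nonneg (by norm_num) q
      calc (q - 1) * s = ((1/2:ℝ) ^ q * (2:ℝ) ^ q) * ((q - 1) * s) := by rw [hhalf2]; ring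
        _ = (1/2:ℝ) ^ q * (L * s) := by rw [hLdef]; ring
        _ ≤ (1/2:ℝ) ^ q * t₁ := mul_le_mul_of_nonneg_left hLt hh
    have htail2 : (1 - F t₁) ^ (1/q) ≤ 1/2 := by
      have h := Real.rpow_le_rpow h0F (htail.trans htau) (by positivity : (0:ℝ) ≤ 1/q)
      rwa [← Real.rpow_mul (by norm_num : (0:ℝ) ≤ 1/2),
        mul_one_div_cancel hq0.ne', Real.rpow_one] at h
    have hA : (t₂ - s) ^ (1/p₀) < w t₂ := hroot s t₂ (by linarith) hE2 ht₂.le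
    have hB : w t₂ ≤ t₁ ^ (1/p₀) + t₂ ^ (1/p₀) * (1/2) := by
      have h1 := key2 t₁ t₂ ht₁.le h12
      have h2 : w t₁ ≤ t₁ ^ (1/p₀) := hwle t₁ ht₁.le
      have h3 : (t₂ - t₁) ^ (1/p₀) ≤ t₂ ^ (1/p₀) :=
        Real.rpow_le_rpow (by linarith) (by linarith) hrpos.le
      have h5 : (t₂ - t₁) ^ (1/p₀) * (1 - F t₁) ^ (1/q) ≤ t₂ ^ (1/p₀) * (1/2) :=
        mul_le_mul h3 htail2 (Real.rpow_nonneg h0F _) (Real.rpow_nonneg ht₂.le _)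
      linarith
    have hC : (t₂ / 2) ^ (1/p₀) ≤ (t₂ - s) ^ (1/p₀) :=
      Real.rpow_le_rpow (by positivity) (by linarith) hrpos.le
    have hD2 : (t₂ / 2) ^ (1/p₀) = t₂ ^ (1/p₀) * (1/2:ℝ) ^ (1/p₀) := by
      rw [show t₂ / 2 = t₂ * (1/2) by ring, Real.mul_rpow ht₂.le (by norm_num)]
    have hc2 : t₂ ^ (1/p₀) * c < t₁ ^ (1/p₀) := by
      have hh : t₂ ^ (1/p₀) * (1/2:ℝ) ^ (1/p₀) < t₁ ^ (1/p₀) + t₂ ^ (1/p₀) * (1/2) := by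
        rw [← hD2]; exact lt_of_le_of_lt hC (lt_of_lt_of_le hA hB)
      rw [hcdef]; linarith [hh]
    have ht₂r : t₂ ^ (1/p₀) ≤ c⁻¹ * t₁ ^ (1/p₀) := by
      rw [inv_mul_eq_div]
      exact ((lt_div_iff₀ hc).2 hc2).le
    have h := Real.rpow_le_rpow (Real.rpow_nonneg ht₂.le _) ht₂r hp₀pos.le
    rwa [Real.mul_rpow (inv_nonneg.2 hc.le) (Real.rpow_nonneg ht₁.le _),
      ← Real.rpow_mul ht₂.le, ← Real.rpow_mul ht₁.le,
      one_div_mul_cancel hp₀pos.ne', Real.rpow_one, Real.rpow_one, ← hKdef] at h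
  -- Step C : gap bound
  have pairC : ∀ s t₁ t₂ : ℝ, 1 ≤ s → L * s ≤ t₁ → t₁ ≤ t₂ →
      t₁ - s < w t₁ ^ p₀ → t₂ - s < w t₂ ^ p₀ → t₂ - t₁ ≤ M * s := by
    intro s t₁ t₂ hs hLt h12 hE1 hE2
    have hs0 : (0:ℝ) < s := by linarith
    by_cases hd : t₂ - t₁ ≤ 2 * s
    · linarith [mul_le_mul_of_nonneg_right hM2 hs0.le]
    push_neg at hd
    have ht₁4s : 4 * s ≤ t₁ := le_trans (mul_le_mul_of_nonneg_right hL4 hs0.le) hLt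
    have ht₁ : (0:ℝ) < t₁ := by linarith
    have ht₂ : (0:ℝ) < t₂ := lt_of_lt_of_le ht₁ h12
    have hd0 : (0:ℝ) < t₂ - t₁ := by linarith
    have hKt := pairB s t₁ t₂ hs hLt h12 hE1 hE2
    have htail := tailb s t₁ hs hLt hE1
    have h0F : (0:ℝ) ≤ 1 - F t₁ := by have := hFle1 t₁ ht₁.le; linarith
    have hτ0 : (0:ℝ) ≤ (q - 1) * s / t₁ := div_nonneg (mul_nonneg (by linarith) hs0.le) ht₁.le
    have hBpos : (0:ℝ) < t₂ - s := by linarith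
    -- concavity lower bound
    have hconc := aux_concave_rpow (A := t₁) (B := t₂ - s) ht₁.le (by linarith) hBpos
      hrpos hrlt1.le
    -- upper bound from Hölder
    have hA : (t₂ - s) ^ (1/p₀) < w t₂ := hroot s t₂ hBpos hE2 ht₂.le
    have hchain : (t₂ - s) ^ (1/p₀) - t₁ ^ (1/p₀) <
        (t₂ - t₁) ^ (1/p₀) * ((q - 1) * s / t₁) ^ (1/q) := by
      have h1 := key2 t₁ t₂ ht₁.le h12
      have h2 : (1 - F t₁) ^ (1/q) ≤ ((q - 1) * s / t₁) ^ (1/q) :=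
        Real.rpow_le_rpow h0F htail (by positivity)
      have h3 : w t₁ ≤ t₁ ^ (1/p₀) := hwle t₁ ht₁.le
      have h4 : (t₂ - t₁) ^ (1/p₀) * (1 - F t₁) ^ (1/q) ≤
          (t₂ - t₁) ^ (1/p₀) * ((q - 1) * s / t₁) ^ (1/q) :=
        mul_le_mul_of_nonneg_left h2 (Real.rpow_nonneg hd0.le _)
      linarith
    -- rewrite the power with negative exponent
    have hBr : (t₂ - s) ^ (1/p₀ - 1) = ((t₂ - s) ^ (1/q))⁻¹ := by
      rw [show 1/p₀ - 1 = -(1/q) by linarith, Real.rpow_neg hBpos.le]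
    have hinv : (t₂ ^ (1/q))⁻¹ ≤ ((t₂ - s) ^ (1/q))⁻¹ := by
      apply inv_anti₀ (Real.rpow_pos_of_pos hBpos _)
      exact Real.rpow_le_rpow hBpos.le (by linarith) (by positivity)
    have hT : (0:ℝ) < t₂ ^ (1/q) := Real.rpow_pos_of_pos ht₂ _
    have hkey : (t₂ - t₁) / 2 * (1/p₀ * (t₂ ^ (1/q))⁻¹) <
        (t₂ - t₁) ^ (1/p₀) * ((q - 1) * s / t₁) ^ (1/q) := by
      have hle1 : (t₂ - t₁) / 2 * (1/p₀ * (t₂ ^ (1/q))⁻¹) ≤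
          ((t₂ - s) - t₁) * (1/p₀ * ((t₂ - s) ^ (1/q))⁻¹) := by
        apply mul_le_mul (by linarith)
          (mul_le_mul_of_nonneg_left hinv hrpos.le) (by positivity) (by linarith)
      rw [← hBr] at hle1
      exact lt_of_le_of_lt (hle1.trans hconc) hchain
    -- split d = d^{1/p₀} * d^{1/q}
    have hsplit : t₂ - t₁ = (t₂ - t₁) ^ (1/p₀) * (t₂ - t₁) ^ (1/q) := by
      rw [← Real.rpow_add hd0, hp1q, Real.rpow_one]
    have ha : (0:ℝ) < (t₂ - t₁) ^ (1/p₀) := Real.rpow_pos_of_pos hd0 _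
    have hb0 : (0:ℝ) < (t₂ - t₁) ^ (1/q) := Real.rpow_pos_of_pos hd0 _
    have hτq : (0:ℝ) ≤ ((q - 1) * s / t₁) ^ (1/q) := Real.rpow_nonneg hτ0 _
    have h2' : (t₂ - t₁) ^ (1/q) * (1/(2*p₀) * (t₂ ^ (1/q))⁻¹) <
        ((q - 1) * s / t₁) ^ (1/q) := by
      have hX : (t₂ - t₁) / 2 * (1/p₀ * (t₂ ^ (1/q))⁻¹) =
          (t₂ - t₁) ^ (1/p₀) * ((t₂ - t₁) ^ (1/q) * (1/(2*p₀) * (t₂ ^ (1/q))⁻¹)) := by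
        rw [show (t₂ - t₁) ^ (1/p₀) * ((t₂ - t₁) ^ (1/q) * (1/(2*p₀) * (t₂ ^ (1/q))⁻¹)) =
            (t₂ - t₁) ^ (1/p₀) * (t₂ - t₁) ^ (1/q) * (1/(2*p₀) * (t₂ ^ (1/q))⁻¹) from by ring,
          ← hsplit]
        ring
      rw [hX] at hkey
      exact (mul_lt_mul_iff_right₀ ha).1 hkey
    have hbb : (t₂ - t₁) ^ (1/q) < ((q - 1) * s / t₁) ^ (1/q) * (2 * p₀ * t₂ ^ (1/q)) := by
      have h3' := mul_lt_mul_of_pos_right h2' (show (0:ℝ) < 2 * p₀ * t₂ ^ (1/q) by positivity)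
      have hcalc : (t₂ - t₁) ^ (1/q) * (1/(2*p₀) * (t₂ ^ (1/q))⁻¹) * (2 * p₀ * t₂ ^ (1/q)) =
          (t₂ - t₁) ^ (1/q) := by
        field_simp
      rw [hcalc] at h3'
      exact h3'
    have hfin : t₂ - t₁ < (q - 1) * s / t₁ * ((2*p₀) ^ q * t₂) := by
      have h := Real.rpow_lt_rpow hb0.le hbb hq0
      rw [← Real.rpow_mul hd0.le, one_div_mul_cancel hq0.ne', Real.rpow_one] at h
      rw [Real.mul_rpow hτq (by positivity),
        ← Real.rpow_mul hτ0, one_div_mul_cancel hq0.ne', Real.rpow_one,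
        Real.mul_rpow (by positivity : (0:ℝ) ≤ 2*p₀) (Real.rpow_nonneg ht₂.le _),
        ← Real.rpow_mul ht₂.le, one_div_mul_cancel hq0.ne', Real.rpow_one] at h
      exact h
    have hτt : (q - 1) * s / t₁ * t₂ ≤ (q - 1) * s * K := by
      rw [div_mul_eq_mul_div, div_le_iff₀ ht₁]
      linarith [mul_le_mul_of_nonneg_left hKt (mul_nonneg (show (0:ℝ) ≤ q-1 by linarith) hs0.le)]
    have hfin2 : t₂ - t₁ < (2*p₀) ^ q * ((q - 1) * s * K) := by
      have : (q - 1) * s / t₁ * ((2*p₀) ^ q * t₂) = (2*p₀) ^ q * ((q - 1) * s / t₁ * t₂) := by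
        ring
      rw [this] at hfin
      linarith [hfin, mul_le_mul_of_nonneg_left hτt h2p₀q]
    rw [hMdef]
    linarith [hfin2, hs0]
  -- measure of bad sets
  have hmeas : ∀ s : ℝ, 1 ≤ s →
      volume {t : ℝ | 0 < t ∧ t - s < w t ^ p₀} ≤ ENNReal.ofReal (D * s) := by
    intro s hs
    have hs0 : (0:ℝ) < s := by linarith
    have hLs : L * s ≤ D * s := by nlinarith [hM2, hL4]
    by_cases hne : ∃ t : ℝ, (0 < t ∧ t - s < w t ^ p₀) ∧ L * s ≤ t
    · have hSne : {t : ℝ | (0 < t ∧ t - s < w t ^ p₀) ∧ L * s ≤ t}.Nonempty := hne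
      obtain ⟨t₁, ht₁S, ht₁lt⟩ := Real.lt_sInf_add_pos hSne hs0
      have hbdd : BddBelow {t : ℝ | (0 < t ∧ t - s < w t ^ p₀) ∧ L * s ≤ t} :=
        ⟨0, fun t ht => ht.1.1.le⟩
      have hMs0 : 0 ≤ M * s := by nlinarith [hM2]
      have hsub : {t : ℝ | 0 < t ∧ t - s < w t ^ p₀} ⊆
          Ioc 0 (L * s) ∪ Icc (sInf {t : ℝ | (0 < t ∧ t - s < w t ^ p₀) ∧ L * s ≤ t})
            (t₁ + M * s) := by
        intro t ht
        rcases le_or_gt (L * s) t with hge | hlt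
        · right
          refine ⟨csInf_le hbdd ⟨ht, hge⟩, ?_⟩
          rcases le_or_gt t t₁ with h | h
          · linarith
          · have hgap := pairC s t₁ t hs ht₁S.2 h.le ht₁S.1.2 ht.2
            linarith
        · left; exact ⟨ht.1, hlt.le⟩
      calc volume {t : ℝ | 0 < t ∧ t - s < w t ^ p₀}
          ≤ volume (Ioc 0 (L * s) ∪
              Icc (sInf {t : ℝ | (0 < t ∧ t - s < w t ^ p₀) ∧ L * s ≤ t}) (t₁ + M * s)) :=
            measure_mono hsub
        _ ≤ volume (Ioc 0 (L * s)) +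
              volume (Icc (sInf {t : ℝ | (0 < t ∧ t - s < w t ^ p₀) ∧ L * s ≤ t})
                (t₁ + M * s)) := measure_union_le _ _
        _ = ENNReal.ofReal (L * s - 0) +
              ENNReal.ofReal (t₁ + M * s -
                sInf {t : ℝ | (0 < t ∧ t - s < w t ^ p₀) ∧ L * s ≤ t}) := by
            rw [Real.volume_Ioc, Real.volume_Icc]
        _ ≤ ENNReal.ofReal (L * s) + ENNReal.ofReal ((M + 1) * s) := by
            apply add_le_add
            · exact ENNReal.ofReal_le_ofReal (by linarith)
            · exact ENNReal.ofReal_le_ofReal (by linarith [ht₁lt])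
        _ = ENNReal.ofReal (L * s + (M + 1) * s) := by
            rw [ENNReal.ofReal_add (by nlinarith [hL4]) (by nlinarith [hM2])]
        _ ≤ ENNReal.ofReal (D * s) := ENNReal.ofReal_le_ofReal (by rw [hDdef]; ring_nf; linarith)
    · push_neg at hne
      have hsub : {t : ℝ | 0 < t ∧ t - s < w t ^ p₀} ⊆ Ioc 0 (L * s) := by
        intro t ht
        exact ⟨ht.1, (hne t ht).le⟩
      calc volume {t : ℝ | 0 < t ∧ t - s < w t ^ p₀} ≤ volume (Ioc 0 (L * s)) :=
            measure_mono hsub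
        _ = ENNReal.ofReal (L * s - 0) := Real.volume_Ioc
        _ ≤ ENNReal.ofReal (D * s) := ENNReal.ofReal_le_ofReal (by linarith)
  -- the bad sets are open
  have hopen : ∀ n : ℕ, IsOpen {t : ℝ | 0 < t ∧ t - ((n:ℝ) + 1) < w t ^ p₀} := by
    intro n
    have hcont : ContinuousOn (fun t : ℝ => w t ^ p₀ - t) (Ioi 0) := by
      apply ContinuousOn.sub
      · exact (hwcont.mono Ioi_subset_Ici_self).rpow_const (fun t _ => Or.inr hp₀pos.le)
      · exact continuousOn_id
    have heq : {t : ℝ | 0 < t ∧ t - ((n:ℝ) + 1) < w t ^ p₀} =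
        Ioi (0:ℝ) ∩ (fun t : ℝ => w t ^ p₀ - t) ⁻¹' (Ioi (-((n:ℝ) + 1))) := by
      ext t
      simp only [mem_setOf_eq, mem_inter_iff, mem_Ioi, mem_preimage]
      constructor
      · rintro ⟨h1, h2⟩; exact ⟨h1, by linarith⟩
      · rintro ⟨h1, h2⟩; exact ⟨h1, by linarith⟩
    rw [heq]
    exact hcont.isOpen_inter_preimage isOpen_Ioi isOpen_Ioi
  -- pointwise domination by a sum of indicators
  have hpt : ∀ t ∈ Ioi (0:ℝ), ENNReal.ofReal (Real.exp (β * w t ^ p₀ - t)) ≤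
      ∑' n : ℕ, ({t : ℝ | 0 < t ∧ t - ((n:ℝ) + 1) < w t ^ p₀}).indicator
        (fun _ => ENNReal.ofReal (Real.exp (-(n:ℝ)))) t := by
    intro t ht
    have ht0 : (0:ℝ) < t := ht
    have hΦnn : 0 ≤ t - w t ^ p₀ := by have := hΦ t ht0.le; linarith
    have hmem : t ∈ {t : ℝ | 0 < t ∧ t - ((⌊t - w t ^ p₀⌋₊ : ℝ) + 1) < w t ^ p₀} := by
      refine ⟨ht0, ?_⟩
      have := Nat.lt_floor_add_one (t - w t ^ p₀)
      linarith
    have h1 : ENNReal.ofReal (Real.exp (β * w t ^ p₀ - t)) ≤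
        ({t : ℝ | 0 < t ∧ t - ((⌊t - w t ^ p₀⌋₊ : ℝ) + 1) < w t ^ p₀}).indicator
          (fun _ => ENNReal.ofReal (Real.exp (-(⌊t - w t ^ p₀⌋₊ : ℝ)))) t := by
      rw [indicator_of_mem hmem]
      apply ENNReal.ofReal_le_ofReal
      apply Real.exp_le_exp.2
      have hβ' : β * w t ^ p₀ ≤ w t ^ p₀ :=
        mul_le_of_le_one_left (Real.rpow_nonneg (hwnn t ht0.le) _) hβ
      have hfl : (⌊t - w t ^ p₀⌋₊ : ℝ) ≤ t - w t ^ p₀ := Nat.floor_le hΦnn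
      linarith
    exact h1.trans (ENNReal.le_tsum _)
  -- summation of the level estimates
  have hnum : ∀ n : ℕ, ((n:ℝ) + 1) * Real.exp (-(n:ℝ)) ≤ (3/4:ℝ) ^ n := by
    intro n
    have key : ((n:ℝ) + 1) ≤ (3/4 * Real.exp 1) ^ n := by
      induction n with
      | zero => simp
      | succ k ih =>
        have he : (2:ℝ) ≤ 3/4 * Real.exp 1 := by nlinarith [Real.exp_one_gt_d9]
        have hk : (0:ℝ) ≤ (k:ℝ) := Nat.cast_nonneg k
        have step : (3/4 * Real.exp 1) ^ (k+1) = (3/4 * Real.exp 1) * (3/4 * Real.exp 1) ^ k := by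
          ring
        push_cast
        rw [step]
        calc ((k:ℝ) + 1 + 1) ≤ 2 * ((k:ℝ) + 1) := by linarith
          _ ≤ (3/4 * Real.exp 1) * (3/4 * Real.exp 1) ^ k :=
            mul_le_mul he ih (by linarith) (by linarith)
    have hexp : Real.exp ((n:ℝ)) = (Real.exp 1) ^ n := by
      rw [← Real.exp_nat_mul]; norm_num
    have hpos : (0:ℝ) < Real.exp (-(n:ℝ)) := Real.exp_pos _
    calc ((n:ℝ) + 1) * Real.exp (-(n:ℝ)) ≤ (3/4 * Real.exp 1) ^ n * Real.exp (-(n:ℝ)) :=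
          mul_le_mul_of_nonneg_right key hpos.le
      _ = (3/4:ℝ) ^ n * ((Real.exp 1) ^ n * Real.exp (-(n:ℝ))) := by rw [mul_pow]; ring
      _ = (3/4:ℝ) ^ n := by
          rw [← hexp, ← Real.exp_add, add_neg_cancel, Real.exp_zero, mul_one]
  have hsum : ∀ n : ℕ, (∫⁻ t in Ioi (0:ℝ), ({t : ℝ | 0 < t ∧ t - ((n:ℝ) + 1) < w t ^ p₀}).indicator
      (fun _ => ENNReal.ofReal (Real.exp (-(n:ℝ)))) t) ≤ ENNReal.ofReal (D * (3/4:ℝ) ^ n) := by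
    intro n
    have hEn : volume {t : ℝ | 0 < t ∧ t - ((n:ℝ) + 1) < w t ^ p₀} ≤
        ENNReal.ofReal (D * ((n:ℝ) + 1)) := by
      apply hmeas ((n:ℝ) + 1)
      have : (0:ℝ) ≤ (n:ℝ) := Nat.cast_nonneg n
      linarith
    calc (∫⁻ t in Ioi (0:ℝ), ({t : ℝ | 0 < t ∧ t - ((n:ℝ) + 1) < w t ^ p₀}).indicator
          (fun _ => ENNReal.ofReal (Real.exp (-(n:ℝ)))) t)
        = ENNReal.ofReal (Real.exp (-(n:ℝ))) *
            (volume.restrict (Ioi (0:ℝ))) {t : ℝ | 0 < t ∧ t - ((n:ℝ) + 1) < w t ^ p₀} := by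
          rw [lintegral_indicator (hopen n).measurableSet, setLIntegral_const]
      _ ≤ ENNReal.ofReal (Real.exp (-(n:ℝ))) * ENNReal.ofReal (D * ((n:ℝ) + 1)) := by
          gcongr
          exact le_trans (Measure.restrict_le_self _) hEn
      _ = ENNReal.ofReal (Real.exp (-(n:ℝ)) * (D * ((n:ℝ) + 1))) :=
          (ENNReal.ofReal_mul (Real.exp_nonneg _)).symm
      _ ≤ ENNReal.ofReal (D * (3/4:ℝ) ^ n) := by
          apply ENNReal.ofReal_le_ofReal
          have h := hnum n
          nlinarith [hnum n, hD.le, Real.exp_pos (-(n:ℝ))]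
  -- conclusion
  calc (∫⁻ t in Ioi (0:ℝ), ENNReal.ofReal (Real.exp (β * w t ^ p₀ - t)))
      ≤ ∫⁻ t in Ioi (0:ℝ), ∑' n : ℕ, ({t : ℝ | 0 < t ∧ t - ((n:ℝ) + 1) < w t ^ p₀}).indicator
          (fun _ => ENNReal.ofReal (Real.exp (-(n:ℝ)))) t := by
        apply lintegral_mono_ae
        exact (ae_restrict_iff' measurableSet_Ioi).2 (ae_of_all _ hpt)
    _ = ∑' n : ℕ, ∫⁻ t in Ioi (0:ℝ), ({t : ℝ | 0 < t ∧ t - ((n:ℝ) + 1) < w t ^ p₀}).indicator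
          (fun _ => ENNReal.ofReal (Real.exp (-(n:ℝ)))) t := by
        apply lintegral_tsum
        intro n
        exact (measurable_const.indicator (hopen n).measurableSet).aemeasurable
    _ ≤ ∑' n : ℕ, ENNReal.ofReal (D * (3/4:ℝ) ^ n) := ENNReal.tsum_le_tsum hsum
    _ = ∑' n : ℕ, ENNReal.ofReal D * (ENNReal.ofReal (3/4:ℝ)) ^ n := by
        apply tsum_congr
        intro n
        rw [ENNReal.ofReal_mul hD.le, ENNReal.ofReal_pow (by norm_num : (0:ℝ) ≤ 3/4)]
    _ = ENNReal.ofReal D * ∑' n : ℕ, (ENNReal.ofReal (3/4:ℝ)) ^ n := ENNReal.tsum_mul_left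
    _ = ENNReal.ofReal D * (1 - ENNReal.ofReal (3/4:ℝ))⁻¹ := by rw [ENNReal.tsum_geometric]
    _ ≤ ENNReal.ofReal (D * 4) := by
        have h34 : (1:ENNReal) - ENNReal.ofReal (3/4:ℝ) = ENNReal.ofReal (1/4:ℝ) := by
          rw [← ENNReal.ofReal_one, ← ENNReal.ofReal_sub _ (by norm_num : (0:ℝ) ≤ 3/4)]
          norm_num
        rw [h34, ← ENNReal.ofReal_inv_of_pos (by norm_num : (0:ℝ) < 1/4),
          ← ENNReal.ofReal_mul hD.le]
        apply ENNReal.ofReal_le_ofReal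
        norm_num
end

section
/- Let q > 1 and p satisfy 1/p + 1/q = 1. If w : [0,∞) → ℝ is continuously differentiable with w(0) = 0, w′(t) ≥ 0 for all t ≥ 0, and ∫₀^∞ w′(t)^q dt < ∞, then lim_{t→∞} w(t)/t^{1/p} = 0, and consequently for every β > 0 the integral ∫₀^∞ e^{β w(t)^p − t} dt is finite. -/
open MeasureTheory Real Set Filter
open scoped ENNReal

/-- The critical integral in Moser's one-dimensional lemma exists for every `β > 0`:
`w(t)/t^{1/p} → 0` and `∫₀^∞ e^{β w^p − t} dt < ∞`. -/
theorem moser_lemma_finiteness (q p : ℝ) (hq : 1 < q) (hpq : 1 / p + 1 / q = 1)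
    (w w' : ℝ → ℝ)
    (hderiv : ∀ t ∈ Set.Ici (0:ℝ), HasDerivWithinAt w (w' t) (Set.Ici 0) t)
    (hcont : ContinuousOn w' (Set.Ici 0))
    (h0 : w 0 = 0) (hmono : ∀ t, 0 ≤ t → 0 ≤ w' t)
    (hint : (∫⁻ t in Set.Ioi (0:ℝ), ENNReal.ofReal (w' t ^ q)) < ⊤) :
    Filter.Tendsto (fun t => w t / t ^ (1 / p)) Filter.atTop (nhds 0) ∧
    ∀ β : ℝ, 0 < β →
      (∫⁻ t in Set.Ioi (0:ℝ), ENNReal.ofReal (Real.exp (β * w t ^ p - t))) < ⊤ := by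
  have hq0 : 0 < q := lt_trans one_pos hq
  have hinvq : 1 / q < 1 := by rw [div_lt_one hq0]; exact hq
  have hinvq0 : 0 < 1 / q := by positivity
  have hinvp0 : 0 < 1 / p := by linarith
  have hp0 : 0 < p := by
    rcases lt_trichotomy p 0 with h | h | h
    · exfalso; have : 1 / p < 0 := div_neg_of_pos_of_neg one_pos h; linarith
    · exfalso; rw [h] at hinvp0; simp at hinvp0
    · exact h
  have hp1 : 1 < p := by
    have : 1 / p < 1 := by linarith
    rwa [div_lt_one hp0] at this
  have hqp : q.HolderConjugate p := Real.holderConjugate_iff.mpr ⟨hq, by rw [inv_eq_one_div, inv_eq_one_div]; linarith⟩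
  -- continuity of w
  have hwc : ContinuousOn w (Set.Ici 0) := fun t ht => (hderiv t ht).continuousWithinAt
  -- FTC
  have hftc : ∀ s t : ℝ, 0 ≤ s → s ≤ t → ∫ x in s..t, w' x = w t - w s := by
    intro s t hs hst
    refine intervalIntegral.integral_eq_sub_of_hasDeriv_right_of_le hst
      (hwc.mono (Icc_subset_Ici_self.trans (Ici_subset_Ici.mpr hs))) (fun x hx => ?_) ?_
    · have hx0 : (0:ℝ) ≤ x := le_trans hs hx.1.le
      exact (hderiv x hx0).mono (fun y hy => le_trans hx0 (le_of_lt hy))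
    · apply ContinuousOn.intervalIntegrable
      rw [uIcc_of_le hst]
      exact hcont.mono (Icc_subset_Ici_self.trans (Ici_subset_Ici.mpr hs))
  -- monotone & nonneg
  have hwmono : ∀ s t : ℝ, 0 ≤ s → s ≤ t → w s ≤ w t := by
    intro s t hs hst
    have := hftc s t hs hst
    have hnn : 0 ≤ ∫ x in s..t, w' x :=
      intervalIntegral.integral_nonneg hst (fun x hx => hmono x (le_trans hs hx.1))
    linarith
  have hwnn : ∀ t : ℝ, 0 ≤ t → 0 ≤ w t := fun t ht => h0 ▸ hwmono 0 t le_rfl ht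
  -- tail integral
  set T : ℝ → ℝ≥0∞ := fun s => ∫⁻ x in Set.Ioi s, ENNReal.ofReal (w' x ^ q) with hT
  have hTle : ∀ s : ℝ, 0 ≤ s → T s ≤ ∫⁻ t in Set.Ioi (0:ℝ), ENNReal.ofReal (w' t ^ q) :=
    fun s hs => lintegral_mono_set (Ioi_subset_Ioi hs)
  have hTlt : ∀ s : ℝ, 0 ≤ s → T s < ⊤ := fun s hs => lt_of_le_of_lt (hTle s hs) hint
  -- key Hoelder estimate
  have hkey : ∀ s t : ℝ, 0 ≤ s → s ≤ t →
      w t - w s ≤ (T s).toReal ^ (1/q) * (t - s) ^ (1/p) := by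
    intro s t hs hst
    have hIoc : Set.Ioc s t ⊆ Set.Ici (0:ℝ) := fun y hy => le_trans hs hy.1.le
    have hmeas : AEMeasurable (fun x => ENNReal.ofReal (w' x))
        (volume.restrict (Set.Ioc s t)) :=
      ENNReal.measurable_ofReal.comp_aemeasurable
        ((hcont.mono hIoc).aemeasurable measurableSet_Ioc)
    have hint' : IntegrableOn w' (Set.Ioc s t) :=
      ((hcont.mono (fun y (hy : y ∈ Set.Icc s t) => le_trans hs hy.1)).integrableOn_compact
        isCompact_Icc).mono_set Ioc_subset_Icc_self
    have h1 : ENNReal.ofReal (w t - w s)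
        = ∫⁻ x in Set.Ioc s t, ENNReal.ofReal (w' x) := by
      rw [← hftc s t hs hst, intervalIntegral.integral_of_le hst,
        ← ofReal_integral_eq_lintegral_ofReal hint'
          (((ae_restrict_mem measurableSet_Ioc).mono fun x hx => hmono x (hIoc hx)))]
    have h2 : (∫⁻ x in Set.Ioc s t, ENNReal.ofReal (w' x))
        ≤ (∫⁻ x in Set.Ioc s t, ENNReal.ofReal (w' x) ^ q) ^ (1/q)
          * (∫⁻ _ in Set.Ioc s t, (1:ℝ≥0∞)) ^ (1/p) := by
      have := ENNReal.lintegral_mul_le_Lp_mul_Lq (volume.restrict (Set.Ioc s t)) hqp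
        hmeas aemeasurable_const (g := fun _ => (1:ℝ≥0∞))
      simpa [ENNReal.one_rpow] using this
    have h3 : (∫⁻ x in Set.Ioc s t, ENNReal.ofReal (w' x) ^ q)
        = ∫⁻ x in Set.Ioc s t, ENNReal.ofReal (w' x ^ q) := by
      refine lintegral_congr_ae (((ae_restrict_mem measurableSet_Ioc).mono fun x hx => ?_))
      exact ENNReal.ofReal_rpow_of_nonneg (hmono x (hIoc hx)) hq0.le
    have h4 : (∫⁻ x in Set.Ioc s t, ENNReal.ofReal (w' x ^ q)) ≤ T s :=
      lintegral_mono_set Ioc_subset_Ioi_self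
    have h5 : (∫⁻ _ in Set.Ioc s t, (1:ℝ≥0∞)) = ENNReal.ofReal (t - s) := by
      rw [setLIntegral_const, one_mul, Real.volume_Ioc]
    have h6 : ENNReal.ofReal (w t - w s)
        ≤ (T s) ^ (1/q) * ENNReal.ofReal (t - s) ^ (1/p) := by
      rw [h1]
      refine le_trans h2 ?_
      rw [h5]
      exact mul_le_mul_left (ENNReal.rpow_le_rpow (le_trans (le_of_eq h3) h4) (by positivity)) _
    have hTr : T s = ENNReal.ofReal ((T s).toReal) := (ENNReal.ofReal_toReal (hTlt s hs).ne).symm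
    have h7 : ENNReal.ofReal (w t - w s)
        ≤ ENNReal.ofReal ((T s).toReal ^ (1/q) * (t - s) ^ (1/p)) := by
      rw [ENNReal.ofReal_mul (Real.rpow_nonneg ENNReal.toReal_nonneg _),
        ← ENNReal.ofReal_rpow_of_nonneg ENNReal.toReal_nonneg hinvq0.le,
        ← ENNReal.ofReal_rpow_of_nonneg (by linarith : (0:ℝ) ≤ t - s) hinvp0.le, ← hTr]
      exact h6
    exact (ENNReal.ofReal_le_ofReal_iff
      (mul_nonneg (Real.rpow_nonneg ENNReal.toReal_nonneg _)
        (Real.rpow_nonneg (by linarith) _))).mp h7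
  -- tail smallness
  have htail : ∀ ε : ℝ≥0∞, 0 < ε → ∃ n : ℕ, T (n:ℝ) < ε := by
    intro ε hε
    set f : ℝ → ℝ≥0∞ := fun x => ENNReal.ofReal (w' x ^ q) with hf
    set ν : Measure ℝ := (volume.restrict (Set.Ioi (0:ℝ))).withDensity f with hν
    have hνIoi : ∀ n : ℕ, ν (Set.Ioi (n:ℝ)) = T (n:ℝ) := by
      intro n
      rw [hν, withDensity_apply _ measurableSet_Ioi,
        Measure.restrict_restrict measurableSet_Ioi,
        Set.inter_eq_left.mpr (Set.Ioi_subset_Ioi (Nat.cast_nonneg n))]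
    have hνfin : ν (Set.Ioi ((0:ℕ):ℝ)) ≠ ⊤ := by
      rw [hνIoi 0]
      simpa using (hTlt 0 le_rfl).ne
    have hiInter : (⋂ n : ℕ, Set.Ioi ((n:ℕ):ℝ)) = ∅ := by
      ext x
      simp only [Set.mem_iInter, Set.mem_Ioi, Set.mem_empty_iff_false, iff_false, not_forall,
        not_lt]
      obtain ⟨n, hn⟩ := exists_nat_gt x
      exact ⟨n, hn.le⟩
    have htendsto : Tendsto (fun n : ℕ => ν (Set.Ioi (n:ℝ))) atTop (nhds 0) := by
      have := tendsto_measure_iInter_atTop (μ := ν) (s := fun n : ℕ => Set.Ioi ((n:ℕ):ℝ))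
        (fun n => measurableSet_Ioi.nullMeasurableSet)
        (fun m n hmn => Set.Ioi_subset_Ioi (by exact_mod_cast hmn)) ⟨0, hνfin⟩
      rwa [hiInter, measure_empty] at this
    have := (htendsto.eventually_lt_const hε).exists
    obtain ⟨n, hn⟩ := this
    exact ⟨n, by rwa [hνIoi n] at hn⟩
  -- Part 1: the limit
  have hlim : Tendsto (fun t => w t / t ^ (1 / p)) atTop (nhds 0) := by
    rw [Metric.tendsto_atTop]
    intro ε hε
    obtain ⟨n, hn⟩ := htail (ENNReal.ofReal ((ε/2) ^ q))
      (ENNReal.ofReal_pos.mpr (Real.rpow_pos_of_pos (by linarith) q))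
    have hCn : (T (n:ℝ)).toReal ^ (1/q) ≤ ε/2 := by
      have h1 : (T (n:ℝ)).toReal < (ε/2) ^ q := ENNReal.toReal_lt_of_lt_ofReal hn
      calc (T (n:ℝ)).toReal ^ (1/q) ≤ ((ε/2) ^ q) ^ (1/q) :=
            Real.rpow_le_rpow ENNReal.toReal_nonneg h1.le hinvq0.le
        _ = ε/2 := by
            rw [← Real.rpow_mul (by positivity), mul_one_div, div_self hq0.ne', Real.rpow_one]
    have hdiv : Tendsto (fun t : ℝ => w (n:ℝ) / t ^ (1/p)) atTop (nhds 0) :=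
      Tendsto.div_atTop tendsto_const_nhds (tendsto_rpow_atTop hinvp0)
    obtain ⟨N, hN⟩ := Metric.tendsto_atTop.mp hdiv (ε/2) (by linarith)
    refine ⟨max N (max (n:ℝ) 1), fun t ht => ?_⟩
    have htN : N ≤ t := le_trans (le_max_left _ _) ht
    have htn : (n:ℝ) ≤ t := le_trans (le_trans (le_max_left _ _) (le_max_right _ _)) ht
    have ht1 : (1:ℝ) ≤ t := le_trans (le_trans (le_max_right _ _) (le_max_right _ _)) ht
    have ht0 : (0:ℝ) < t := lt_of_lt_of_le one_pos ht1
    have htp : (0:ℝ) < t ^ (1/p) := Real.rpow_pos_of_pos ht0 _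
    have hb : w t ≤ w (n:ℝ) + (ε/2) * t ^ (1/p) := by
      have hk := hkey (n:ℝ) t (Nat.cast_nonneg n) htn
      have h2 : (T (n:ℝ)).toReal ^ (1/q) * (t - (n:ℝ)) ^ (1/p) ≤ (ε/2) * t ^ (1/p) := by
        have hts : (t - (n:ℝ)) ^ (1/p) ≤ t ^ (1/p) :=
          Real.rpow_le_rpow (by linarith [Nat.cast_nonneg (α := ℝ) n]) (by linarith) hinvp0.le
        exact mul_le_mul hCn hts (Real.rpow_nonneg (by linarith) _)
          (by linarith)
      linarith
    rw [Real.dist_eq, sub_zero, abs_of_nonneg (div_nonneg (hwnn t ht0.le) htp.le)]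
    have hle : w t / t ^ (1/p) ≤ w (n:ℝ) / t ^ (1/p) + ε/2 := by
      rw [div_add' _ _ _ htp.ne']
      rw [div_le_div_iff₀ htp htp]
      have : ε / 2 * t ^ (1/p) ≤ ε / 2 * t ^ (1/p) := le_rfl
      nlinarith [htp]
    have hwn : w (n:ℝ) / t ^ (1/p) < ε/2 := by
      have := hN t htN
      rwa [Real.dist_eq, sub_zero,
        abs_of_nonneg (div_nonneg (hwnn (n:ℝ) (Nat.cast_nonneg n)) htp.le)] at this
    linarith
  refine ⟨hlim, fun β hβ => ?_⟩
  -- Part 2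
  set δ : ℝ := (1/(2*β)) ^ (1/p) with hδ
  have hδ0 : 0 < δ := Real.rpow_pos_of_pos (by positivity) _
  obtain ⟨N, hN⟩ := Metric.tendsto_atTop.mp hlim δ hδ0
  set s : ℝ := max N 1 with hsdef
  have hs1 : (1:ℝ) ≤ s := le_max_right _ _
  have hs0 : (0:ℝ) < s := lt_of_lt_of_le one_pos hs1
  -- pointwise bound on the tail
  have hbound : ∀ t : ℝ, t ∈ Set.Ioi s →
      Real.exp (β * w t ^ p - t) ≤ Real.exp (-((1/2) * t)) := by
    intro t ht
    have hts : s ≤ t := (le_of_lt ht)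
    have ht0 : (0:ℝ) < t := lt_of_lt_of_le hs0 hts
    have htp : (0:ℝ) < t ^ (1/p) := Real.rpow_pos_of_pos ht0 _
    have hwt : w t < δ * t ^ (1/p) := by
      have := hN t (le_trans (le_max_left _ _) hts)
      rw [Real.dist_eq, sub_zero, abs_of_nonneg (div_nonneg (hwnn t ht0.le) htp.le)] at this
      exact (div_lt_iff₀ htp).mp this
    have hwtp : w t ^ p ≤ (1/(2*β)) * t := by
      have h1 : w t ^ p ≤ (δ * t ^ (1/p)) ^ p :=
        Real.rpow_le_rpow (hwnn t ht0.le) hwt.le hp0.le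
      have h2 : (δ * t ^ (1/p)) ^ p = (1/(2*β)) * t := by
        rw [Real.mul_rpow hδ0.le htp.le, hδ,
          ← Real.rpow_mul (by positivity : (0:ℝ) ≤ 1/(2*β)),
          ← Real.rpow_mul ht0.le, one_div_mul_cancel hp0.ne', Real.rpow_one, Real.rpow_one]
      linarith
    have : β * w t ^ p - t ≤ -((1/2) * t) := by
      have := mul_le_mul_of_nonneg_left hwtp hβ.le
      have hb2 : β * ((1/(2*β)) * t) = t/2 := by field_simp
      linarith
    exact Real.exp_le_exp.mpr this
  have hsplit : Set.Ioi (0:ℝ) = Set.Ioc 0 s ∪ Set.Ioi s := (Set.Ioc_union_Ioi_eq_Ioi hs0.le).symm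
  rw [hsplit, lintegral_union measurableSet_Ioi (Set.Ioc_disjoint_Ioi le_rfl)]
  refine ENNReal.add_lt_top.mpr ⟨?_, ?_⟩
  · -- compact part
    have hb1 : ∀ t ∈ Set.Ioc (0:ℝ) s,
        ENNReal.ofReal (Real.exp (β * w t ^ p - t))
          ≤ ENNReal.ofReal (Real.exp (β * w s ^ p)) := by
      intro t ht
      refine ENNReal.ofReal_le_ofReal (Real.exp_le_exp.mpr ?_)
      have hwts : w t ≤ w s := hwmono t s ht.1.le ht.2
      have : w t ^ p ≤ w s ^ p := Real.rpow_le_rpow (hwnn t ht.1.le) hwts hp0.le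
      nlinarith [ht.1, hβ]
    calc (∫⁻ t in Set.Ioc (0:ℝ) s, ENNReal.ofReal (Real.exp (β * w t ^ p - t)))
        ≤ ∫⁻ _ in Set.Ioc (0:ℝ) s, ENNReal.ofReal (Real.exp (β * w s ^ p)) :=
          setLIntegral_mono' measurableSet_Ioc hb1
      _ = ENNReal.ofReal (Real.exp (β * w s ^ p)) * volume (Set.Ioc (0:ℝ) s) :=
          setLIntegral_const _ _
      _ < ⊤ := ENNReal.mul_lt_top ENNReal.ofReal_lt_top measure_Ioc_lt_top
  · -- tail part
    have hfin : IntegrableOn (fun t : ℝ => Real.exp (-((1/2) * t))) (Set.Ioi s) := by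
      simpa [neg_mul] using exp_neg_integrableOn_Ioi s (by norm_num : (0:ℝ) < 1/2)
    calc (∫⁻ t in Set.Ioi s, ENNReal.ofReal (Real.exp (β * w t ^ p - t)))
        ≤ ∫⁻ t in Set.Ioi s, ENNReal.ofReal (Real.exp (-((1/2) * t))) :=
          setLIntegral_mono' measurableSet_Ioi
            (fun t ht => ENNReal.ofReal_le_ofReal (hbound t ht))
      _ = ∫⁻ t in Set.Ioi s, (‖Real.exp (-((1/2) * t))‖₊ : ℝ≥0∞) := by
          refine lintegral_congr fun t => ?_
          exact (Real.enorm_eq_ofReal (Real.exp_nonneg _)).symm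
      _ < ⊤ := hfin.2
end

section
/- Let q > 1, p satisfy 1/p + 1/q = 1, and β > 1. For t₁ > 0 define w(t) = t₁^{1/p} · min(t/t₁, 1) for t ≥ 0. Then w(0) = 0, w is nondecreasing and Lipschitz with derivative w′(t) = t₁^{−1/q} for 0 < t < t₁ and w′(t) = 0 for t > t₁, ∫₀^∞ w′(t)^q dt = 1, and ∫₀^∞ e^{β w(t)^p − t} dt ≥ e^{(β−1) t₁}. In particular, for β > 1 the supremum of ∫₀^∞ e^{β w^p − t} dt over all nondecreasing Lipschitz w with w(0) = 0 and ∫₀^∞ (w′)^q dt ≤ 1 is +∞. -/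
open MeasureTheory Real Set Filter

lemma moser_aux (q p β t₁ : ℝ) (hq : 1 < q) (hpq : 1 / p + 1 / q = 1)
    (hβ : 1 < β) (ht₁ : 0 < t₁) (w : ℝ → ℝ)
    (hw : w = fun t => t₁ ^ (1 / p) * min (t / t₁) 1) :
    w 0 = 0 ∧ Monotone w ∧ (∃ K : NNReal, LipschitzWith K w) ∧
    (∀ t, 0 < t → t < t₁ → deriv w t = t₁ ^ (-(1 / q))) ∧
    (∀ t, t₁ < t → deriv w t = 0) ∧
    (∫⁻ t in Set.Ioi (0:ℝ), ENNReal.ofReal (deriv w t ^ q)) = 1 ∧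
    ENNReal.ofReal (Real.exp ((β - 1) * t₁)) ≤
      (∫⁻ t in Set.Ioi (0:ℝ), ENNReal.ofReal (Real.exp (β * w t ^ p - t))) := by
  have hq0 : 0 < q := lt_trans one_pos hq
  have h1q : 1 / q < 1 := by rw [div_lt_one hq0]; exact hq
  have hp1 : 0 < 1 / p := by linarith
  have hp0 : 0 < p := one_div_pos.mp hp1
  have hpne : p ≠ 0 := ne_of_gt hp0
  have hc : (0:ℝ) < t₁ ^ (1 / p) := rpow_pos_of_pos ht₁ _
  have hexp : 1 / p - 1 = -(1 / q) := by linarith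
  -- derivative on (0, t₁)
  have hderiv1 : ∀ t, 0 < t → t < t₁ → deriv w t = t₁ ^ (-(1 / q)) := by
    intro t ht0 htt
    have hev : w =ᶠ[nhds t] fun s => t₁ ^ (1 / p) / t₁ * s := by
      filter_upwards [Iio_mem_nhds htt] with s hs
      have : s / t₁ ≤ 1 := by
        rw [div_le_one ht₁]; exact le_of_lt hs
      rw [hw]
      simp only [min_eq_left this]
      field_simp
    rw [hev.deriv_eq]
    rw [deriv_const_mul_field']
    simp only [deriv_id'', mul_one]
    rw [div_eq_mul_inv, ← Real.rpow_neg_one t₁, ← Real.rpow_add ht₁, ← sub_eq_add_neg, hexp]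
  have hderiv2 : ∀ t, t₁ < t → deriv w t = 0 := by
    intro t htt
    have hev : w =ᶠ[nhds t] fun _ => t₁ ^ (1 / p) := by
      filter_upwards [Ioi_mem_nhds htt] with s hs
      have : (1:ℝ) ≤ s / t₁ := by
        rw [le_div_iff₀ ht₁, one_mul]; exact le_of_lt hs
      rw [hw]
      simp [min_eq_right this]
    rw [hev.deriv_eq, deriv_const]
  refine ⟨?_, ?_, ?_, hderiv1, hderiv2, ?_, ?_⟩
  · simp [hw]
  · intro a b hab
    simp only [hw]
    gcongr
  · -- Lipschitz
    refine ⟨(t₁ ^ (1 / p) / t₁).toNNReal, LipschitzWith.of_dist_le_mul fun x y => ?_⟩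
    have hK : ((t₁ ^ (1 / p) / t₁).toNNReal : ℝ) = t₁ ^ (1 / p) / t₁ :=
      Real.coe_toNNReal _ (by positivity)
    rw [hw, Real.dist_eq, Real.dist_eq, hK, ← mul_sub, abs_mul, abs_of_pos hc]
    have h1 : |min (x / t₁) 1 - min (y / t₁) 1| ≤ |x / t₁ - y / t₁| := by
      have := abs_min_sub_min_le_max (x / t₁) 1 (y / t₁) 1
      simpa using this
    calc t₁ ^ (1 / p) * |min (x / t₁) 1 - min (y / t₁) 1|
        ≤ t₁ ^ (1 / p) * |x / t₁ - y / t₁| := by gcongr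
      _ = t₁ ^ (1 / p) / t₁ * |x - y| := by
          rw [div_sub_div_same, abs_div, abs_of_pos ht₁]; ring
  · -- the lintegral of (deriv w)^q equals 1
    have hset : Ioi (0:ℝ) =ᵐ[volume] ((Ioo 0 t₁ ∪ Ioi t₁ : Set ℝ)) := by
      have h1 : Ioo 0 t₁ ∪ Ioi t₁ = Ioi 0 \ {t₁} := by
        ext x
        simp only [mem_union, mem_Ioo, mem_Ioi, mem_diff, mem_singleton_iff]
        constructor
        · rintro (⟨h1, h2⟩ | h1)
          · exact ⟨h1, ne_of_lt h2⟩
          · exact ⟨lt_trans ht₁ h1, ne_of_gt h1⟩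
        · rintro ⟨h1, h2⟩
          rcases lt_or_gt_of_ne h2 with h | h
          · exact Or.inl ⟨h1, h⟩
          · exact Or.inr h
      rw [h1]
      exact (MeasureTheory.diff_null_ae_eq_self (measure_singleton t₁)).symm
    rw [setLIntegral_congr hset,
      lintegral_union measurableSet_Ioi
        (Set.disjoint_left.mpr fun x hx hx' => lt_asymm hx.2 hx')]
    have hI1 : (∫⁻ t in Ioo (0:ℝ) t₁, ENNReal.ofReal (deriv w t ^ q)) = 1 := by
      rw [setLIntegral_congr_fun measurableSet_Ioo
        ((fun t (ht : t ∈ Ioo (0:ℝ) t₁) => by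
          rw [hderiv1 t ht.1 ht.2]))]
      rw [setLIntegral_const, Real.volume_Ioo, sub_zero]
      have h2 : (t₁ ^ (-(1 / q)) : ℝ) ^ q = t₁⁻¹ := by
        rw [← Real.rpow_mul ht₁.le, neg_mul, one_div_mul_cancel (ne_of_gt hq0),
          Real.rpow_neg_one]
      rw [h2, ← ENNReal.ofReal_mul (by positivity), inv_mul_cancel₀ (ne_of_gt ht₁),
        ENNReal.ofReal_one]
    have hI2 : (∫⁻ t in Ioi t₁, ENNReal.ofReal (deriv w t ^ q)) = 0 := by
      rw [setLIntegral_congr_fun measurableSet_Ioi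
        ((fun t (ht : t ∈ Ioi t₁) => by
          rw [hderiv2 t ht, Real.zero_rpow (ne_of_gt hq0), ENNReal.ofReal_zero]))]
      simp
    rw [hI1, hI2, add_zero]
  · -- lower bound for the exponential integral
    have hval : ∀ t ∈ Ioi t₁, Real.exp (β * w t ^ p - t) = Real.exp (β * t₁ - t) := by
      intro t ht
      have h1 : (1:ℝ) ≤ t / t₁ := by
        rw [le_div_iff₀ ht₁, one_mul]; exact le_of_lt ht
      rw [hw]
      simp only [min_eq_right h1, mul_one]
      rw [← Real.rpow_mul ht₁.le, one_div_mul_cancel hpne, Real.rpow_one]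
    have hint : IntegrableOn (fun t => Real.exp (β * t₁ - t)) (Ioi t₁) := by
      have : (fun t => Real.exp (β * t₁ - t)) = fun t => Real.exp (β * t₁) * Real.exp (-t) := by
        funext t; rw [← Real.exp_add]; ring_nf
      rw [this]
      exact ((exp_neg_integrableOn_Ioi t₁ one_pos).congr_fun
        (fun t _ => by simp) measurableSet_Ioi).const_mul _
    have heq : ENNReal.ofReal (Real.exp ((β - 1) * t₁)) =
        ∫⁻ t in Ioi t₁, ENNReal.ofReal (Real.exp (β * t₁ - t)) := by
      rw [← MeasureTheory.ofReal_integral_eq_lintegral_ofReal hint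
        (ae_of_all _ fun t => (Real.exp_pos _).le)]
      congr 1
      have : ∀ t : ℝ, Real.exp (β * t₁ - t) = Real.exp (β * t₁) * Real.exp (-t) := by
        intro t; rw [← Real.exp_add]; ring_nf
      rw [MeasureTheory.setIntegral_congr_fun measurableSet_Ioi (fun t _ => this t),
        MeasureTheory.integral_const_mul, integral_exp_neg_Ioi, ← Real.exp_add]
      ring_nf
    rw [heq]
    calc (∫⁻ t in Ioi t₁, ENNReal.ofReal (Real.exp (β * t₁ - t)))
        = ∫⁻ t in Ioi t₁, ENNReal.ofReal (Real.exp (β * w t ^ p - t)) :=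
          setLIntegral_congr_fun measurableSet_Ioi
            (fun t ht => by rw [hval t ht])
      _ ≤ ∫⁻ t in Ioi (0:ℝ), ENNReal.ofReal (Real.exp (β * w t ^ p - t)) :=
          lintegral_mono_set (Ioi_subset_Ioi ht₁.le)

/-- Failure of Moser's one-dimensional lemma for `β > 1`, via the explicit family
`w(t) = t₁^{1/p} min(t/t₁, 1)`; in particular the supremum over admissible `w` is `+∞`. -/
theorem moser_lemma_sharp (q p β t₁ : ℝ) (hq : 1 < q) (hpq : 1 / p + 1 / q = 1)
    (hβ : 1 < β) (ht₁ : 0 < t₁) (w : ℝ → ℝ)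
    (hw : w = fun t => t₁ ^ (1 / p) * min (t / t₁) 1) :
    w 0 = 0 ∧ Monotone w ∧ (∃ K : NNReal, LipschitzWith K w) ∧
    (∀ t, 0 < t → t < t₁ → deriv w t = t₁ ^ (-(1 / q))) ∧
    (∀ t, t₁ < t → deriv w t = 0) ∧
    (∫⁻ t in Set.Ioi (0:ℝ), ENNReal.ofReal (deriv w t ^ q)) = 1 ∧
    ENNReal.ofReal (Real.exp ((β - 1) * t₁)) ≤
      (∫⁻ t in Set.Ioi (0:ℝ), ENNReal.ofReal (Real.exp (β * w t ^ p - t))) ∧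
    ∀ M : ℝ, ∃ v : ℝ → ℝ, v 0 = 0 ∧ Monotone v ∧ (∃ K : NNReal, LipschitzWith K v) ∧
      (∫⁻ t in Set.Ioi (0:ℝ), ENNReal.ofReal (deriv v t ^ q)) ≤ 1 ∧
      ENNReal.ofReal M ≤
        ∫⁻ t in Set.Ioi (0:ℝ), ENNReal.ofReal (Real.exp (β * v t ^ p - t)) := by
  obtain ⟨h1, h2, h3, h4, h5, h6, h7⟩ := moser_aux q p β t₁ hq hpq hβ ht₁ w hw
  refine ⟨h1, h2, h3, h4, h5, h6, h7, ?_⟩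
  intro M
  set T : ℝ := max 1 (M / (β - 1)) with hT
  have hT0 : 0 < T := lt_of_lt_of_le one_pos (le_max_left _ _)
  obtain ⟨g1, g2, g3, _, _, g6, g7⟩ :=
    moser_aux q p β T hq hpq hβ hT0 (fun t => T ^ (1 / p) * min (t / T) 1) rfl
  refine ⟨_, g1, g2, g3, le_of_eq g6, le_trans ?_ g7⟩
  apply ENNReal.ofReal_le_ofReal
  have hβ1 : (0:ℝ) < β - 1 := by linarith
  have h : M / (β - 1) ≤ T := le_max_right 1 (M / (β - 1))
  have hx : (β - 1) * (M / (β - 1)) = M := by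
    rw [mul_comm, div_mul_eq_mul_div, mul_div_assoc, div_self (ne_of_gt hβ1), mul_one]
  have h2' : (β - 1) * (M / (β - 1)) ≤ (β - 1) * T :=
    mul_le_mul_of_nonneg_left h hβ1.le
  linarith [Real.add_one_le_exp ((β - 1) * T)]
end
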